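/- arXiv:math/9906119 — 2 statements merged into one kernel-verified Lean document; each statement's English description precedes it below -/
import Mathlib

section
/- Suppose K in Q[[Q]] has constant coefficient 14 and satisfies: for every y in Q[[q]][t] with L1~ y = 0, D_Q~ ( D_Q~ ( K^{-1} * D_Q~ ( D_Q~ ( T(y) ) ) ) ) = 0. Write K = 14 + sum_{d >= 1} c_d Q^d. Then the (necessarily unique) rational numbers n_1, n_2, n_3, n_4, n_5 satisfying c_d = sum_{k | d} k^3 * n_k for 1 <= d <= 5 are the instanton numbers n_1 = 588, n_2 = 12103, n_3 = 583884, n_4 = 41359136, n_5 = 3609394096. -/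
open PowerSeries

/-- The operator `D = q * d/dq` on `ℚ[[q]]`. -/
noncomputable def Dop (f : ℚ⟦X⟧) : ℚ⟦X⟧ := X * derivative ℚ f

/-- Coefficient of `D^4` in the Picard-Fuchs operator. -/
noncomputable def A4 : ℚ⟦X⟧ := (1 - 289 * X - 57 * X ^ 2 + X ^ 3) * (1 - 3 * X) ^ 2
/-- Coefficient of `D^3` in the Picard-Fuchs operator. -/
noncomputable def A3 : ℚ⟦X⟧ := 4 * X * (3 * X - 1) * (143 + 57 * X - 87 * X ^ 2 + 3 * X ^ 3)
/-- Coefficient of `D^2` in the Picard-Fuchs operator. -/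
noncomputable def A2 : ℚ⟦X⟧ :=
  2 * X * (-212 - 473 * X + 725 * X ^ 2 - 435 * X ^ 3 + 27 * X ^ 4)
/-- Coefficient of `D^1` in the Picard-Fuchs operator. -/
noncomputable def A1 : ℚ⟦X⟧ :=
  2 * X * (-69 - 481 * X + 159 * X ^ 2 - 171 * X ^ 3 + 18 * X ^ 4)
/-- Coefficient of `D^0` in the Picard-Fuchs operator. -/
noncomputable def A0 : ℚ⟦X⟧ := X * (-17 - 202 * X - 8 * X ^ 2 - 54 * X ^ 3 + 9 * X ^ 4)

/-- The Picard-Fuchs operator of Rødland's mirror family of the Pfaffian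
Calabi-Yau 3-fold, acting on `ℚ[[q]]` (here `q` is `PowerSeries.X`). -/
noncomputable def L1 (f : ℚ⟦X⟧) : ℚ⟦X⟧ :=
  A4 * Dop^[4] f + A3 * Dop^[3] f + A2 * Dop^[2] f + A1 * Dop f + A0 * f

/-- The extension of `D` to the derivation on `ℚ[[q]][t]` with `D t = 1`
(where `t` plays the role of `ln q`). -/
noncomputable def Dt (y : Polynomial ℚ⟦X⟧) : Polynomial ℚ⟦X⟧ :=
  Polynomial.derivative y + y.sum fun n a => Polynomial.C (Dop a) * Polynomial.X ^ n

/-- The Picard-Fuchs operator acting on `ℚ[[q]][t]`, with `D` replaced by its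
extension `Dt`. -/
noncomputable def L1t (y : Polynomial ℚ⟦X⟧) : Polynomial ℚ⟦X⟧ :=
    Polynomial.C A4 * Dt^[4] y + Polynomial.C A3 * Dt^[3] y
  + Polynomial.C A2 * Dt^[2] y + Polynomial.C A1 * Dt y + Polynomial.C A0 * y

/-- Composition `f ∘ g` of formal power series (intended for `g` with zero constant
coefficient, so that the sum below is the genuine substitution of `g` into `f`):
the `k`-th coefficient is `Σ_{n ≤ k} (coeff n f) * coeff k (g^n)`. -/
noncomputable def psComp (f g : ℚ⟦X⟧) : ℚ⟦X⟧ :=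
  PowerSeries.mk fun k => ∑ n ∈ Finset.range (k + 1), coeff n f * coeff k (g ^ n)

/-- The mirror map `μ = q · exp(h)` with `h = g f⁻¹`, where `f = I₀` and
`t f + g = I₁` are the holomorphic and logarithmic solutions. -/
noncomputable def mirrorMap (f g : ℚ⟦X⟧) : ℚ⟦X⟧ := X * psComp (exp ℚ) (g * f⁻¹)

/-- The mirror transform: for `y = Σᵢ tⁱ yᵢ ∈ ℚ[[q]][t]` and `ν` the compositional
inverse of the mirror map, `T(y) = Σᵢ (s - h(ν))ⁱ · ((yᵢ f⁻¹)(ν)) ∈ ℚ[[Q]][s]`,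
where `h = g f⁻¹`. -/
noncomputable def mirrorT (f g nu : ℚ⟦X⟧) (y : Polynomial ℚ⟦X⟧) : Polynomial ℚ⟦X⟧ :=
  y.sum fun i a =>
    (Polynomial.X - Polynomial.C (psComp (g * f⁻¹) nu)) ^ i *
      Polynomial.C (psComp (a * f⁻¹) nu)

set_option maxHeartbeats 2000000

namespace PF

lemma coeff_Dop (u : ℚ⟦X⟧) (n : ℕ) : coeff n (Dop u) = n * coeff n u := by
  unfold Dop
  cases n with
  | zero => simp
  | succ m => rw [coeff_succ_X_mul, coeff_derivative]; push_cast; ring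

lemma coeff_DopIt (k : ℕ) (u : ℚ⟦X⟧) (n : ℕ) :
    coeff n (Dop^[k] u) = (n : ℚ)^k * coeff n u := by
  induction k generalizing u with
  | zero => simp
  | succ m ih => rw [Function.iterate_succ_apply, ih, coeff_Dop, pow_succ]; ring

lemma coeff_mul' (a b : ℚ⟦X⟧) (n : ℕ) :
    coeff n (a * b) = ∑ m ∈ Finset.range (n+1), coeff m a * coeff (n-m) b := by
  rw [coeff_mul, Finset.Nat.sum_antidiagonal_eq_sum_range_succ_mk]

lemma coeff_twoMul (u : ℚ⟦X⟧) (n : ℕ) : coeff n (2 * u) = 2 * coeff n u := by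
  rw [two_mul, map_add, two_mul]

lemma Dop_zero : Dop 0 = 0 := by unfold Dop; simp
lemma Dop_add (a b : ℚ⟦X⟧) : Dop (a + b) = Dop a + Dop b := by
  unfold Dop; rw [map_add, mul_add]
lemma Dop_one : Dop 1 = 0 := by
  ext k; rw [coeff_Dop, coeff_one]
  by_cases h : k = 0 <;> simp [h]
lemma Dop_C (c : ℚ) : Dop ((C : ℚ →+* ℚ⟦X⟧) c) = 0 := by
  ext k; rw [coeff_Dop, coeff_C]
  by_cases h : k = 0 <;> simp [h]
lemma Dop_ofNat2 : Dop (2 : ℚ⟦X⟧) = 0 := by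
  rw [← map_ofNat (C : ℚ →+* ℚ⟦X⟧) 2]; exact Dop_C 2
lemma Dop_twoMul (u : ℚ⟦X⟧) : Dop (2 * u) = 2 * Dop u := by
  ext k; rw [coeff_Dop, coeff_twoMul, coeff_twoMul, coeff_Dop]; ring
lemma DopIt_twoMul (k : ℕ) (u : ℚ⟦X⟧) : Dop^[k] (2 * u) = 2 * Dop^[k] u := by
  induction k generalizing u with
  | zero => simp
  | succ m ih => rw [Function.iterate_succ_apply, Dop_twoMul, ih, ← Function.iterate_succ_apply]
lemma DopIt_zero (k : ℕ) : Dop^[k] (0 : ℚ⟦X⟧) = 0 := Function.iterate_fixed Dop_zero k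

-- expanded forms of the A's
lemma hA4 : A4 = 1 - 295*X + 1686*X^2 - 2258*X^3 - 519*X^4 + 9*X^5 := by unfold A4; ring
lemma hA3 : A3 = -572*X + 1488*X^2 + 1032*X^3 - 1056*X^4 + 36*X^5 := by unfold A3; ring
lemma hA2 : A2 = -424*X - 946*X^2 + 1450*X^3 - 870*X^4 + 54*X^5 := by unfold A2; ring
lemma hA1 : A1 = -138*X - 962*X^2 + 318*X^3 - 342*X^4 + 36*X^5 := by unfold A1; ring
lemma hA0 : A0 = -17*X - 202*X^2 - 8*X^3 - 54*X^4 + 9*X^5 := by unfold A0; ring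

----------------------------------------------------------------
-- Dt on quadratics
----------------------------------------------------------------

lemma Dt_add (y z : Polynomial ℚ⟦X⟧) : Dt (y + z) = Dt y + Dt z := by
  unfold Dt
  rw [map_add, Polynomial.sum_add_index]
  · ring
  · intro i; rw [Dop_zero, map_zero, zero_mul]
  · intro i a b; rw [Dop_add, map_add, add_mul]

lemma Dt_monomial (k : ℕ) (a : ℚ⟦X⟧) :
    Dt (Polynomial.C a * Polynomial.X ^ k) =
      k • (Polynomial.C a * Polynomial.X ^ (k-1)) + Polynomial.C (Dop a) * Polynomial.X ^ k := by
  unfold Dt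
  rw [Polynomial.C_mul_X_pow_eq_monomial, Polynomial.sum_monomial_index]
  · rw [Polynomial.derivative_monomial, Polynomial.C_mul_X_pow_eq_monomial,
      Polynomial.C_mul_X_pow_eq_monomial]
    simp [Polynomial.smul_monomial, mul_comm]
  · rw [Dop_zero, map_zero, zero_mul]

lemma Dt_C (a : ℚ⟦X⟧) : Dt (Polynomial.C a) = Polynomial.C (Dop a) := by
  have := Dt_monomial 0 a; simpa using this

lemma Dt_CX (a : ℚ⟦X⟧) :
    Dt (Polynomial.C a * Polynomial.X) = Polynomial.C a + Polynomial.C (Dop a) * Polynomial.X := by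
  have := Dt_monomial 1 a; simpa using this

lemma Dt_CX2 (a : ℚ⟦X⟧) :
    Dt (Polynomial.C a * Polynomial.X ^ 2) =
      Polynomial.C (2 * a) * Polynomial.X + Polynomial.C (Dop a) * Polynomial.X ^ 2 := by
  have := Dt_monomial 2 a
  norm_num at this
  rw [this]; congr 1
  rw [map_mul, map_ofNat]; ring

lemma Dt_quad (a b c : ℚ⟦X⟧) :
    Dt (Polynomial.C c + Polynomial.C b * Polynomial.X + Polynomial.C a * Polynomial.X ^ 2) =
      Polynomial.C (Dop c + b) + Polynomial.C (Dop b + 2 * a) * Polynomial.X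
        + Polynomial.C (Dop a) * Polynomial.X ^ 2 := by
  rw [Dt_add, Dt_add, Dt_C, Dt_CX, Dt_CX2, map_add, map_add]
  ring

noncomputable def L1p (u : ℚ⟦X⟧) : ℚ⟦X⟧ :=
  4*(A4 * Dop^[3] u) + 3*(A3 * Dop^[2] u) + 2*(A2 * Dop u) + A1 * u
noncomputable def L1pp (u : ℚ⟦X⟧) : ℚ⟦X⟧ :=
  12*(A4 * Dop^[2] u) + 6*(A3 * Dop u) + 2*(A2 * u)

lemma L1t_quad (a b c : ℚ⟦X⟧) :
    L1t (Polynomial.C c + Polynomial.C b * Polynomial.X + Polynomial.C a * Polynomial.X ^ 2) =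
      Polynomial.C (L1 c + L1p b + L1pp a)
      + Polynomial.C (L1 b + 2 * L1p a) * Polynomial.X
      + Polynomial.C (L1 a) * Polynomial.X ^ 2 := by
  have e4 : ∀ y : Polynomial ℚ⟦X⟧, Dt^[4] y = Dt (Dt (Dt (Dt y))) := fun y => rfl
  have e3 : ∀ y : Polynomial ℚ⟦X⟧, Dt^[3] y = Dt (Dt (Dt y)) := fun y => rfl
  have e2 : ∀ y : Polynomial ℚ⟦X⟧, Dt^[2] y = Dt (Dt y) := fun y => rfl
  have d4 : ∀ u : ℚ⟦X⟧, Dop^[4] u = Dop (Dop (Dop (Dop u))) := fun u => rfl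
  have d3 : ∀ u : ℚ⟦X⟧, Dop^[3] u = Dop (Dop (Dop u)) := fun u => rfl
  have d2 : ∀ u : ℚ⟦X⟧, Dop^[2] u = Dop (Dop u) := fun u => rfl
  rw [L1t, e4, e3, e2]
  rw [Dt_quad a b c, Dt_quad, Dt_quad, Dt_quad]
  simp only [L1, L1p, L1pp, d4, d3, d2, Dop_add, Dop_twoMul, map_add, map_mul, map_ofNat]
  ring

lemma quad_zero {u v z : ℚ⟦X⟧}
    (h : Polynomial.C u + Polynomial.C v * Polynomial.X + Polynomial.C z * Polynomial.X ^ 2 = 0) :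
    u = 0 ∧ v = 0 ∧ z = 0 := by
  refine ⟨?_, ?_, ?_⟩
  · have := congrArg (fun p => Polynomial.coeff p 0) h
    simpa using this
  · have := congrArg (fun p => Polynomial.coeff p 1) h
    simpa using this
  · have := congrArg (fun p => Polynomial.coeff p 2) h
    simpa using this

----------------------------------------------------------------
-- coefficientwise form of L1, and solving L1 w = r
----------------------------------------------------------------

noncomputable def Bc (n m : ℕ) : ℚ :=
  coeff m A4 * ((n-m : ℕ):ℚ)^4 + coeff m A3 * ((n-m : ℕ):ℚ)^3
  + coeff m A2 * ((n-m : ℕ):ℚ)^2 + coeff m A1 * ((n-m : ℕ):ℚ) + coeff m A0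

lemma coeff_L1 (u : ℚ⟦X⟧) (n : ℕ) :
    coeff n (L1 u) = ∑ m ∈ Finset.range (n+1), Bc n m * coeff (n-m) u := by
  rw [L1]
  simp only [map_add, coeff_mul', coeff_DopIt, coeff_Dop]
  rw [← Finset.sum_add_distrib, ← Finset.sum_add_distrib, ← Finset.sum_add_distrib,
    ← Finset.sum_add_distrib]
  refine Finset.sum_congr rfl fun m hm => ?_
  unfold Bc; ring

lemma cA4_0 : coeff 0 A4 = (1 : ℚ) := by
  rw [hA4]; simp only [← map_ofNat (C : ℚ →+* ℚ⟦X⟧), map_add, map_sub, map_neg, coeff_C_mul,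
    coeff_X_pow, coeff_X, coeff_C, coeff_one]; norm_num

lemma cA4_1 : coeff 1 A4 = ((-295) : ℚ) := by
  rw [hA4]; simp only [← map_ofNat (C : ℚ →+* ℚ⟦X⟧), map_add, map_sub, map_neg, coeff_C_mul,
    coeff_X_pow, coeff_X, coeff_C, coeff_one]; norm_num

lemma cA4_2 : coeff 2 A4 = (1686 : ℚ) := by
  rw [hA4]; simp only [← map_ofNat (C : ℚ →+* ℚ⟦X⟧), map_add, map_sub, map_neg, coeff_C_mul,
    coeff_X_pow, coeff_X, coeff_C, coeff_one]; norm_num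

lemma cA4_3 : coeff 3 A4 = ((-2258) : ℚ) := by
  rw [hA4]; simp only [← map_ofNat (C : ℚ →+* ℚ⟦X⟧), map_add, map_sub, map_neg, coeff_C_mul,
    coeff_X_pow, coeff_X, coeff_C, coeff_one]; norm_num

lemma cA4_4 : coeff 4 A4 = ((-519) : ℚ) := by
  rw [hA4]; simp only [← map_ofNat (C : ℚ →+* ℚ⟦X⟧), map_add, map_sub, map_neg, coeff_C_mul,
    coeff_X_pow, coeff_X, coeff_C, coeff_one]; norm_num

lemma cA4_5 : coeff 5 A4 = (9 : ℚ) := by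
  rw [hA4]; simp only [← map_ofNat (C : ℚ →+* ℚ⟦X⟧), map_add, map_sub, map_neg, coeff_C_mul,
    coeff_X_pow, coeff_X, coeff_C, coeff_one]; norm_num

lemma cA3_0 : coeff 0 A3 = (0 : ℚ) := by
  rw [hA3]; simp only [← map_ofNat (C : ℚ →+* ℚ⟦X⟧), map_add, map_sub, map_neg, coeff_C_mul,
    coeff_X_pow, coeff_X, coeff_C, coeff_one]; norm_num

lemma cA3_1 : coeff 1 A3 = ((-572) : ℚ) := by
  rw [hA3]; simp only [← map_ofNat (C : ℚ →+* ℚ⟦X⟧), map_add, map_sub, map_neg, coeff_C_mul,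
    coeff_X_pow, coeff_X, coeff_C, coeff_one]; norm_num

lemma cA3_2 : coeff 2 A3 = (1488 : ℚ) := by
  rw [hA3]; simp only [← map_ofNat (C : ℚ →+* ℚ⟦X⟧), map_add, map_sub, map_neg, coeff_C_mul,
    coeff_X_pow, coeff_X, coeff_C, coeff_one]; norm_num

lemma cA3_3 : coeff 3 A3 = (1032 : ℚ) := by
  rw [hA3]; simp only [← map_ofNat (C : ℚ →+* ℚ⟦X⟧), map_add, map_sub, map_neg, coeff_C_mul,
    coeff_X_pow, coeff_X, coeff_C, coeff_one]; norm_num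

lemma cA3_4 : coeff 4 A3 = ((-1056) : ℚ) := by
  rw [hA3]; simp only [← map_ofNat (C : ℚ →+* ℚ⟦X⟧), map_add, map_sub, map_neg, coeff_C_mul,
    coeff_X_pow, coeff_X, coeff_C, coeff_one]; norm_num

lemma cA3_5 : coeff 5 A3 = (36 : ℚ) := by
  rw [hA3]; simp only [← map_ofNat (C : ℚ →+* ℚ⟦X⟧), map_add, map_sub, map_neg, coeff_C_mul,
    coeff_X_pow, coeff_X, coeff_C, coeff_one]; norm_num

lemma cA2_0 : coeff 0 A2 = (0 : ℚ) := by
  rw [hA2]; simp only [← map_ofNat (C : ℚ →+* ℚ⟦X⟧), map_add, map_sub, map_neg, coeff_C_mul,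
    coeff_X_pow, coeff_X, coeff_C, coeff_one]; norm_num

lemma cA2_1 : coeff 1 A2 = ((-424) : ℚ) := by
  rw [hA2]; simp only [← map_ofNat (C : ℚ →+* ℚ⟦X⟧), map_add, map_sub, map_neg, coeff_C_mul,
    coeff_X_pow, coeff_X, coeff_C, coeff_one]; norm_num

lemma cA2_2 : coeff 2 A2 = ((-946) : ℚ) := by
  rw [hA2]; simp only [← map_ofNat (C : ℚ →+* ℚ⟦X⟧), map_add, map_sub, map_neg, coeff_C_mul,
    coeff_X_pow, coeff_X, coeff_C, coeff_one]; norm_num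

lemma cA2_3 : coeff 3 A2 = (1450 : ℚ) := by
  rw [hA2]; simp only [← map_ofNat (C : ℚ →+* ℚ⟦X⟧), map_add, map_sub, map_neg, coeff_C_mul,
    coeff_X_pow, coeff_X, coeff_C, coeff_one]; norm_num

lemma cA2_4 : coeff 4 A2 = ((-870) : ℚ) := by
  rw [hA2]; simp only [← map_ofNat (C : ℚ →+* ℚ⟦X⟧), map_add, map_sub, map_neg, coeff_C_mul,
    coeff_X_pow, coeff_X, coeff_C, coeff_one]; norm_num

lemma cA2_5 : coeff 5 A2 = (54 : ℚ) := by
  rw [hA2]; simp only [← map_ofNat (C : ℚ →+* ℚ⟦X⟧), map_add, map_sub, map_neg, coeff_C_mul,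
    coeff_X_pow, coeff_X, coeff_C, coeff_one]; norm_num

lemma cA1_0 : coeff 0 A1 = (0 : ℚ) := by
  rw [hA1]; simp only [← map_ofNat (C : ℚ →+* ℚ⟦X⟧), map_add, map_sub, map_neg, coeff_C_mul,
    coeff_X_pow, coeff_X, coeff_C, coeff_one]; norm_num

lemma cA1_1 : coeff 1 A1 = ((-138) : ℚ) := by
  rw [hA1]; simp only [← map_ofNat (C : ℚ →+* ℚ⟦X⟧), map_add, map_sub, map_neg, coeff_C_mul,
    coeff_X_pow, coeff_X, coeff_C, coeff_one]; norm_num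

lemma cA1_2 : coeff 2 A1 = ((-962) : ℚ) := by
  rw [hA1]; simp only [← map_ofNat (C : ℚ →+* ℚ⟦X⟧), map_add, map_sub, map_neg, coeff_C_mul,
    coeff_X_pow, coeff_X, coeff_C, coeff_one]; norm_num

lemma cA1_3 : coeff 3 A1 = (318 : ℚ) := by
  rw [hA1]; simp only [← map_ofNat (C : ℚ →+* ℚ⟦X⟧), map_add, map_sub, map_neg, coeff_C_mul,
    coeff_X_pow, coeff_X, coeff_C, coeff_one]; norm_num

lemma cA1_4 : coeff 4 A1 = ((-342) : ℚ) := by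
  rw [hA1]; simp only [← map_ofNat (C : ℚ →+* ℚ⟦X⟧), map_add, map_sub, map_neg, coeff_C_mul,
    coeff_X_pow, coeff_X, coeff_C, coeff_one]; norm_num

lemma cA1_5 : coeff 5 A1 = (36 : ℚ) := by
  rw [hA1]; simp only [← map_ofNat (C : ℚ →+* ℚ⟦X⟧), map_add, map_sub, map_neg, coeff_C_mul,
    coeff_X_pow, coeff_X, coeff_C, coeff_one]; norm_num

lemma cA0_0 : coeff 0 A0 = (0 : ℚ) := by
  rw [hA0]; simp only [← map_ofNat (C : ℚ →+* ℚ⟦X⟧), map_add, map_sub, map_neg, coeff_C_mul,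
    coeff_X_pow, coeff_X, coeff_C, coeff_one]; norm_num

lemma cA0_1 : coeff 1 A0 = ((-17) : ℚ) := by
  rw [hA0]; simp only [← map_ofNat (C : ℚ →+* ℚ⟦X⟧), map_add, map_sub, map_neg, coeff_C_mul,
    coeff_X_pow, coeff_X, coeff_C, coeff_one]; norm_num

lemma cA0_2 : coeff 2 A0 = ((-202) : ℚ) := by
  rw [hA0]; simp only [← map_ofNat (C : ℚ →+* ℚ⟦X⟧), map_add, map_sub, map_neg, coeff_C_mul,
    coeff_X_pow, coeff_X, coeff_C, coeff_one]; norm_num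

lemma cA0_3 : coeff 3 A0 = ((-8) : ℚ) := by
  rw [hA0]; simp only [← map_ofNat (C : ℚ →+* ℚ⟦X⟧), map_add, map_sub, map_neg, coeff_C_mul,
    coeff_X_pow, coeff_X, coeff_C, coeff_one]; norm_num

lemma cA0_4 : coeff 4 A0 = ((-54) : ℚ) := by
  rw [hA0]; simp only [← map_ofNat (C : ℚ →+* ℚ⟦X⟧), map_add, map_sub, map_neg, coeff_C_mul,
    coeff_X_pow, coeff_X, coeff_C, coeff_one]; norm_num

lemma cA0_5 : coeff 5 A0 = (9 : ℚ) := by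
  rw [hA0]; simp only [← map_ofNat (C : ℚ →+* ℚ⟦X⟧), map_add, map_sub, map_neg, coeff_C_mul,
    coeff_X_pow, coeff_X, coeff_C, coeff_one]; norm_num

lemma coeff_zero_mul (a b : ℚ⟦X⟧) : coeff 0 (a * b) = coeff 0 a * coeff 0 b := by
  rw [coeff_mul']; simp

lemma cexp (n : ℕ) : coeff n (exp ℚ) = 1 / (n.factorial : ℚ) := by
  rw [PowerSeries.coeff_exp]; simp

lemma coeff_two (n : ℕ) : coeff n (2 : ℚ⟦X⟧) = if n = 0 then 2 else 0 := by
  rw [← map_ofNat (C : ℚ →+* ℚ⟦X⟧) 2, coeff_C]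

lemma Bc_diag (n : ℕ) : Bc n 0 = (n : ℚ)^4 := by
  unfold Bc; rw [cA4_0, cA3_0, cA2_0, cA1_0, cA0_0]; simp

noncomputable def wseq (r : ℚ⟦X⟧) : ℕ → ℚ
  | 0 => 0
  | n+1 => (coeff (n+1) r
      - ∑ i ∈ Finset.range (n+1), Bc (n+1) (i+1) * wseq r (n - i)) / ((n:ℚ)+1)^4
decreasing_by exact Nat.lt_succ_of_le (Nat.sub_le n i)

lemma wseq_zero (r : ℚ⟦X⟧) : wseq r 0 = 0 := by rw [wseq]

lemma wseq_succ (r : ℚ⟦X⟧) (n : ℕ) : wseq r (n+1) = (coeff (n+1) r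
      - ∑ i ∈ Finset.range (n+1), Bc (n+1) (i+1) * wseq r (n - i)) / ((n:ℚ)+1)^4 := by
  rw [wseq]

lemma Lsolve (r : ℚ⟦X⟧) (hr : coeff 0 r = 0) : L1 (mk (wseq r)) = r := by
  ext n
  rw [coeff_L1]
  cases n with
  | zero =>
    rw [Finset.sum_range_succ, Finset.sum_range_zero, hr, coeff_mk, wseq_zero, mul_zero, zero_add]
  | succ n =>
    rw [Finset.sum_range_succ']
    have hnz : ((n:ℚ)+1)^4 ≠ 0 := by positivity
    have hs : ∀ i, (n + 1 - (i+1)) = n - i := fun i => by omega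
    simp only [coeff_mk, Nat.sub_zero, hs]
    rw [Bc_diag]
    rw [wseq_succ]
    push_cast
    field_simp
    ring

----------------------------------------------------------------
-- psComp lemmas
----------------------------------------------------------------

lemma coeff_psComp (u v : ℚ⟦X⟧) (k : ℕ) :
    coeff k (psComp u v) = ∑ n ∈ Finset.range (k+1), coeff n u * coeff k (v^n) :=
  coeff_mk _ _

lemma psComp_zero (v : ℚ⟦X⟧) : psComp 0 v = 0 := by
  ext k; simp [coeff_psComp]

lemma psComp_one (v : ℚ⟦X⟧) : psComp 1 v = 1 := by
  ext k
  rw [coeff_psComp]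
  rw [Finset.sum_eq_single 0]
  · simp
  · intro b _ hb; rw [coeff_one, if_neg hb, zero_mul]
  · intro h; simp at h

lemma psComp_add (u₁ u₂ v : ℚ⟦X⟧) : psComp (u₁ + u₂) v = psComp u₁ v + psComp u₂ v := by
  ext k; simp [coeff_psComp, add_mul, Finset.sum_add_distrib]

lemma psComp_twoMul (u v : ℚ⟦X⟧) : psComp (2 * u) v = 2 * psComp u v := by
  ext k
  rw [coeff_psComp, coeff_twoMul, coeff_psComp, Finset.mul_sum]
  refine Finset.sum_congr rfl fun m hm => ?_
  rw [coeff_twoMul]; ring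

----------------------------------------------------------------
-- mirrorT on quadratics
----------------------------------------------------------------

lemma mirrorT_quad (f g nu a b c : ℚ⟦X⟧) :
    mirrorT f g nu (Polynomial.C c + Polynomial.C b * Polynomial.X
        + Polynomial.C a * Polynomial.X ^ 2) =
      Polynomial.C (psComp (c * f⁻¹) nu)
      + (Polynomial.X - Polynomial.C (psComp (g * f⁻¹) nu)) * Polynomial.C (psComp (b * f⁻¹) nu)
      + (Polynomial.X - Polynomial.C (psComp (g * f⁻¹) nu)) ^ 2
          * Polynomial.C (psComp (a * f⁻¹) nu) := by
  unfold mirrorT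
  have h0 : ∀ i : ℕ, (Polynomial.X - Polynomial.C (psComp (g * f⁻¹) nu)) ^ i *
      Polynomial.C (psComp ((0:ℚ⟦X⟧) * f⁻¹) nu) = 0 := by
    intro i; rw [zero_mul, psComp_zero, map_zero, mul_zero]
  have hadd : ∀ (i : ℕ) (a₁ a₂ : ℚ⟦X⟧),
      (Polynomial.X - Polynomial.C (psComp (g * f⁻¹) nu)) ^ i *
        Polynomial.C (psComp ((a₁ + a₂) * f⁻¹) nu)
      = (Polynomial.X - Polynomial.C (psComp (g * f⁻¹) nu)) ^ i *
        Polynomial.C (psComp (a₁ * f⁻¹) nu)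
      + (Polynomial.X - Polynomial.C (psComp (g * f⁻¹) nu)) ^ i *
        Polynomial.C (psComp (a₂ * f⁻¹) nu) := by
    intro i a₁ a₂; rw [add_mul, psComp_add, map_add, mul_add]
  rw [Polynomial.sum_add_index _ _ _ h0 hadd, Polynomial.sum_add_index _ _ _ h0 hadd,
    ← Polynomial.monomial_zero_left (a := c), Polynomial.C_mul_X_eq_monomial,
    Polynomial.C_mul_X_pow_eq_monomial,
    Polynomial.sum_monomial_index _ _ (h0 0), Polynomial.sum_monomial_index _ _ (h0 1),
    Polynomial.sum_monomial_index _ _ (h0 2)]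
  ring

end PF

/-- The instanton numbers of the Pfaffian Calabi-Yau 3-fold: if `K` is the power
series with constant coefficient `14` such that `D²(1/K)D²` annihilates the mirror
transforms of all Picard-Fuchs solutions, and `K = 14 + Σ_{d≥1} c_d Q^d` with
`c_d = Σ_{k ∣ d} k³ n_k` for `1 ≤ d ≤ 5`, then `n₁ = 588`, `n₂ = 12103`,
`n₃ = 583884`, `n₄ = 41359136`, `n₅ = 3609394096`. -/
theorem pfaffian_instanton_numbers (f g nu K : ℚ⟦X⟧)
    (hf₀ : constantCoeff f = 1) (hf : L1 f = 0)
    (hg₀ : constantCoeff g = 0)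
    (hg : L1t (Polynomial.X * Polynomial.C f + Polynomial.C g) = 0)
    (hnu₀ : constantCoeff nu = 0)
    (hnu : psComp nu (mirrorMap f g) = X)
    (hK₀ : constantCoeff K = 14)
    (hK : ∀ y : Polynomial ℚ⟦X⟧, L1t y = 0 →
      Dt (Dt (Polynomial.C K⁻¹ * Dt (Dt (mirrorT f g nu y)))) = 0)
    (n : ℕ → ℚ)
    (hn : ∀ d : ℕ, 1 ≤ d → d ≤ 5 →
      coeff d K = ∑ k ∈ Nat.divisors d, (k : ℚ) ^ 3 * n k) :
    n 1 = 588 ∧ n 2 = 12103 ∧ n 3 = 583884 ∧ n 4 = 41359136 ∧ n 5 = 3609394096 := by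
  classical
  have hfinv : f * f⁻¹ = 1 := PowerSeries.mul_inv_cancel f (by rw [hf₀]; norm_num)
  have hgPF : L1 g + PF.L1p f = 0 := by
    have e : Polynomial.X * Polynomial.C f + Polynomial.C g
        = Polynomial.C g + Polynomial.C f * Polynomial.X
          + Polynomial.C (0:ℚ⟦X⟧) * Polynomial.X ^ 2 := by
      rw [map_zero]; ring
    rw [e, PF.L1t_quad] at hg
    obtain ⟨h1, -, -⟩ := PF.quad_zero hg
    have hpp0 : PF.L1pp 0 = 0 := by
      unfold PF.L1pp
      simp [PF.DopIt_zero, PF.Dop_zero]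
    rw [hpp0, add_zero] at h1
    exact h1
  set r : ℚ⟦X⟧ := -(PF.L1pp f + 2 * PF.L1p g) with hr_def
  have hr0 : coeff 0 r = 0 := by
    rw [hr_def]
    simp only [map_neg, map_add, PF.L1pp, PF.L1p, PF.coeff_zero_mul, PF.coeff_twoMul]
    norm_num [PF.coeff_DopIt, PF.coeff_Dop, PF.cA2_0, PF.cA1_0]
  set w : ℚ⟦X⟧ := mk (PF.wseq r) with hw_def
  have hw : L1 w = r := PF.Lsolve r hr0
  have hy : L1t (Polynomial.C w + Polynomial.C (2*g) * Polynomial.X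
      + Polynomial.C f * Polynomial.X ^ 2) = 0 := by
    rw [PF.L1t_quad]
    have hL1p2g : PF.L1p (2*g) = 2 * PF.L1p g := by
      unfold PF.L1p
      simp only [PF.DopIt_twoMul, PF.Dop_twoMul]
      ring
    have hL12g : L1 (2*g) = 2 * L1 g := by
      unfold L1
      simp only [PF.DopIt_twoMul, PF.Dop_twoMul]
      ring
    rw [hL1p2g, hL12g, hw, hf]
    have e1 : r + 2 * PF.L1p g + PF.L1pp f = 0 := by rw [hr_def]; ring
    have e2 : 2 * L1 g + 2 * PF.L1p f = 0 := by
      rw [← mul_add, hgPF, mul_zero]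
    rw [e1, e2]
    simp
  have happ := hK _ hy
  set H : ℚ⟦X⟧ := psComp (g * f⁻¹) nu with hH_def
  set W : ℚ⟦X⟧ := psComp (w * f⁻¹) nu - H^2 with hW_def
  have hT : mirrorT f g nu (Polynomial.C w + Polynomial.C (2*g) * Polynomial.X
      + Polynomial.C f * Polynomial.X ^ 2)
      = Polynomial.C W + Polynomial.C (0:ℚ⟦X⟧) * Polynomial.X
        + Polynomial.C (1:ℚ⟦X⟧) * Polynomial.X ^ 2 := by
    rw [PF.mirrorT_quad]
    rw [hfinv, PF.psComp_one]
    have e2g : (2*g) * f⁻¹ = 2 * (g * f⁻¹) := by ring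
    rw [e2g, PF.psComp_twoMul, ← hH_def, hW_def]
    simp only [map_sub, map_mul, map_one, map_zero, map_pow, map_ofNat]
    ring
  rw [hT] at happ
  have hchain : Dt (Dt (Polynomial.C K⁻¹ * Dt (Dt (Polynomial.C W
      + Polynomial.C (0:ℚ⟦X⟧) * Polynomial.X + Polynomial.C (1:ℚ⟦X⟧) * Polynomial.X ^ 2))))
      = Polynomial.C (Dop (Dop (K⁻¹ * (Dop (Dop W) + 2)))) := by
    rw [PF.Dt_quad]
    rw [show Dop (0:ℚ⟦X⟧) + 2*1 = (2:ℚ⟦X⟧) by rw [PF.Dop_zero]; ring]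
    rw [show Dop (1:ℚ⟦X⟧) = 0 from PF.Dop_one]
    rw [show Dop W + (0:ℚ⟦X⟧) = Dop W by ring]
    rw [PF.Dt_quad]
    rw [PF.Dop_zero, PF.Dop_ofNat2]
    rw [show (0:ℚ⟦X⟧) + 2*0 = 0 by ring]
    rw [map_zero, zero_mul, zero_mul, add_zero, add_zero]
    rw [← map_mul, PF.Dt_C, PF.Dt_C]
  rw [hchain] at happ
  have hDD : Dop (Dop (K⁻¹ * (Dop (Dop W) + 2))) = 0 := by
    exact_mod_cast Polynomial.C_eq_zero.mp happ
  have hu0 : coeff 0 (K⁻¹ * (Dop (Dop W) + 2)) = 1/7 := by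
    rw [PF.coeff_zero_mul, coeff_zero_eq_constantCoeff, map_add, PowerSeries.constantCoeff_inv,
      hK₀]
    simp [Dop]
    norm_num [map_ofNat]
  have hu1 : coeff 1 (K⁻¹ * (Dop (Dop W) + 2)) = 0 := by
    have e := congrArg (coeff 1) hDD
    simp only [PF.coeff_Dop, map_zero] at e
    norm_num [mul_eq_zero] at e
    exact e
  have hu2 : coeff 2 (K⁻¹ * (Dop (Dop W) + 2)) = 0 := by
    have e := congrArg (coeff 2) hDD
    simp only [PF.coeff_Dop, map_zero] at e
    norm_num [mul_eq_zero] at e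
    exact e
  have hu3 : coeff 3 (K⁻¹ * (Dop (Dop W) + 2)) = 0 := by
    have e := congrArg (coeff 3) hDD
    simp only [PF.coeff_Dop, map_zero] at e
    norm_num [mul_eq_zero] at e
    exact e
  have hu4 : coeff 4 (K⁻¹ * (Dop (Dop W) + 2)) = 0 := by
    have e := congrArg (coeff 4) hDD
    simp only [PF.coeff_Dop, map_zero] at e
    norm_num [mul_eq_zero] at e
    exact e
  have hu5 : coeff 5 (K⁻¹ * (Dop (Dop W) + 2)) = 0 := by
    have e := congrArg (coeff 5) hDD
    simp only [PF.coeff_Dop, map_zero] at e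
    norm_num [mul_eq_zero] at e
    exact e
  have hKu : K * (K⁻¹ * (Dop (Dop W) + 2)) = Dop (Dop W) + 2 := by
    rw [← mul_assoc, PowerSeries.mul_inv_cancel K (by rw [hK₀]; norm_num), one_mul]
  have hfc0 : coeff 0 f = 1 := by rw [coeff_zero_eq_constantCoeff]; exact hf₀
  have hfc1 : coeff 1 f = (17 : ℚ) := by
    have e := congrArg (coeff 1) hf
    simp only [L1, map_add, PF.coeff_mul', PF.coeff_DopIt, PF.coeff_Dop, Finset.sum_range_succ,
      Finset.sum_range_zero, map_zero] at e
    norm_num [PF.cA4_0, PF.cA4_1, PF.cA4_2, PF.cA4_3, PF.cA4_4, PF.cA4_5, PF.cA3_0, PF.cA3_1, PF.cA3_2, PF.cA3_3, PF.cA3_4, PF.cA3_5, PF.cA2_0, PF.cA2_1, PF.cA2_2, PF.cA2_3, PF.cA2_4, PF.cA2_5, PF.cA1_0, PF.cA1_1, PF.cA1_2, PF.cA1_3, PF.cA1_4, PF.cA1_5, PF.cA0_0, PF.cA0_1, PF.cA0_2, PF.cA0_3, PF.cA0_4, PF.cA0_5, hfc0] at e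
    linarith [e]
  have hfc2 : coeff 2 f = (1549 : ℚ) := by
    have e := congrArg (coeff 2) hf
    simp only [L1, map_add, PF.coeff_mul', PF.coeff_DopIt, PF.coeff_Dop, Finset.sum_range_succ,
      Finset.sum_range_zero, map_zero] at e
    norm_num [PF.cA4_0, PF.cA4_1, PF.cA4_2, PF.cA4_3, PF.cA4_4, PF.cA4_5, PF.cA3_0, PF.cA3_1, PF.cA3_2, PF.cA3_3, PF.cA3_4, PF.cA3_5, PF.cA2_0, PF.cA2_1, PF.cA2_2, PF.cA2_3, PF.cA2_4, PF.cA2_5, PF.cA1_0, PF.cA1_1, PF.cA1_2, PF.cA1_3, PF.cA1_4, PF.cA1_5, PF.cA0_0, PF.cA0_1, PF.cA0_2, PF.cA0_3, PF.cA0_4, PF.cA0_5, hfc0, hfc1] at e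
    linarith [e]
  have hfc3 : coeff 3 f = (215585 : ℚ) := by
    have e := congrArg (coeff 3) hf
    simp only [L1, map_add, PF.coeff_mul', PF.coeff_DopIt, PF.coeff_Dop, Finset.sum_range_succ,
      Finset.sum_range_zero, map_zero] at e
    norm_num [PF.cA4_0, PF.cA4_1, PF.cA4_2, PF.cA4_3, PF.cA4_4, PF.cA4_5, PF.cA3_0, PF.cA3_1, PF.cA3_2, PF.cA3_3, PF.cA3_4, PF.cA3_5, PF.cA2_0, PF.cA2_1, PF.cA2_2, PF.cA2_3, PF.cA2_4, PF.cA2_5, PF.cA1_0, PF.cA1_1, PF.cA1_2, PF.cA1_3, PF.cA1_4, PF.cA1_5, PF.cA0_0, PF.cA0_1, PF.cA0_2, PF.cA0_3, PF.cA0_4, PF.cA0_5, hfc0, hfc1, hfc2] at e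
    linarith [e]
  have hfc4 : coeff 4 f = (36505501 : ℚ) := by
    have e := congrArg (coeff 4) hf
    simp only [L1, map_add, PF.coeff_mul', PF.coeff_DopIt, PF.coeff_Dop, Finset.sum_range_succ,
      Finset.sum_range_zero, map_zero] at e
    norm_num [PF.cA4_0, PF.cA4_1, PF.cA4_2, PF.cA4_3, PF.cA4_4, PF.cA4_5, PF.cA3_0, PF.cA3_1, PF.cA3_2, PF.cA3_3, PF.cA3_4, PF.cA3_5, PF.cA2_0, PF.cA2_1, PF.cA2_2, PF.cA2_3, PF.cA2_4, PF.cA2_5, PF.cA1_0, PF.cA1_1, PF.cA1_2, PF.cA1_3, PF.cA1_4, PF.cA1_5, PF.cA0_0, PF.cA0_1, PF.cA0_2, PF.cA0_3, PF.cA0_4, PF.cA0_5, hfc0, hfc1, hfc2, hfc3] at e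
    linarith [e]
  have hfc5 : coeff 5 f = (6921832517 : ℚ) := by
    have e := congrArg (coeff 5) hf
    simp only [L1, map_add, PF.coeff_mul', PF.coeff_DopIt, PF.coeff_Dop, Finset.sum_range_succ,
      Finset.sum_range_zero, map_zero] at e
    norm_num [PF.cA4_0, PF.cA4_1, PF.cA4_2, PF.cA4_3, PF.cA4_4, PF.cA4_5, PF.cA3_0, PF.cA3_1, PF.cA3_2, PF.cA3_3, PF.cA3_4, PF.cA3_5, PF.cA2_0, PF.cA2_1, PF.cA2_2, PF.cA2_3, PF.cA2_4, PF.cA2_5, PF.cA1_0, PF.cA1_1, PF.cA1_2, PF.cA1_3, PF.cA1_4, PF.cA1_5, PF.cA0_0, PF.cA0_1, PF.cA0_2, PF.cA0_3, PF.cA0_4, PF.cA0_5, hfc0, hfc1, hfc2, hfc3, hfc4] at e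
    linarith [e]
  have hgc0 : coeff 0 g = 0 := by rw [coeff_zero_eq_constantCoeff]; exact hg₀
  have hgc1 : coeff 1 g = (70 : ℚ) := by
    have e := congrArg (coeff 1) hgPF
    simp only [L1, PF.L1p, map_add, ← map_ofNat (C : ℚ →+* ℚ⟦X⟧), coeff_C_mul, PF.coeff_mul',
      PF.coeff_DopIt, PF.coeff_Dop, Finset.sum_range_succ, Finset.sum_range_zero, map_zero] at e
    norm_num [PF.cA4_0, PF.cA4_1, PF.cA4_2, PF.cA4_3, PF.cA4_4, PF.cA4_5, PF.cA3_0, PF.cA3_1, PF.cA3_2, PF.cA3_3, PF.cA3_4, PF.cA3_5, PF.cA2_0, PF.cA2_1, PF.cA2_2, PF.cA2_3, PF.cA2_4, PF.cA2_5, PF.cA1_0, PF.cA1_1, PF.cA1_2, PF.cA1_3, PF.cA1_4, PF.cA1_5, PF.cA0_0, PF.cA0_1, PF.cA0_2, PF.cA0_3, PF.cA0_4, PF.cA0_5, hgc0, hfc0, hfc1, hfc2, hfc3, hfc4, hfc5] at e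
    linarith [e]
  have hgc2 : coeff 2 g = (7413 : ℚ) := by
    have e := congrArg (coeff 2) hgPF
    simp only [L1, PF.L1p, map_add, ← map_ofNat (C : ℚ →+* ℚ⟦X⟧), coeff_C_mul, PF.coeff_mul',
      PF.coeff_DopIt, PF.coeff_Dop, Finset.sum_range_succ, Finset.sum_range_zero, map_zero] at e
    norm_num [PF.cA4_0, PF.cA4_1, PF.cA4_2, PF.cA4_3, PF.cA4_4, PF.cA4_5, PF.cA3_0, PF.cA3_1, PF.cA3_2, PF.cA3_3, PF.cA3_4, PF.cA3_5, PF.cA2_0, PF.cA2_1, PF.cA2_2, PF.cA2_3, PF.cA2_4, PF.cA2_5, PF.cA1_0, PF.cA1_1, PF.cA1_2, PF.cA1_3, PF.cA1_4, PF.cA1_5, PF.cA0_0, PF.cA0_1, PF.cA0_2, PF.cA0_3, PF.cA0_4, PF.cA0_5, hgc0, hgc1, hfc0, hfc1, hfc2, hfc3, hfc4, hfc5] at e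
    linarith [e]
  have hgc3 : coeff 3 g = ((3268573 : ℚ)/3) := by
    have e := congrArg (coeff 3) hgPF
    simp only [L1, PF.L1p, map_add, ← map_ofNat (C : ℚ →+* ℚ⟦X⟧), coeff_C_mul, PF.coeff_mul',
      PF.coeff_DopIt, PF.coeff_Dop, Finset.sum_range_succ, Finset.sum_range_zero, map_zero] at e
    norm_num [PF.cA4_0, PF.cA4_1, PF.cA4_2, PF.cA4_3, PF.cA4_4, PF.cA4_5, PF.cA3_0, PF.cA3_1, PF.cA3_2, PF.cA3_3, PF.cA3_4, PF.cA3_5, PF.cA2_0, PF.cA2_1, PF.cA2_2, PF.cA2_3, PF.cA2_4, PF.cA2_5, PF.cA1_0, PF.cA1_1, PF.cA1_2, PF.cA1_3, PF.cA1_4, PF.cA1_5, PF.cA0_0, PF.cA0_1, PF.cA0_2, PF.cA0_3, PF.cA0_4, PF.cA0_5, hgc0, hgc1, hgc2, hfc0, hfc1, hfc2, hfc3, hfc4, hfc5] at e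
    linarith [e]
  have hgc4 : coeff 4 g = ((1138372375 : ℚ)/6) := by
    have e := congrArg (coeff 4) hgPF
    simp only [L1, PF.L1p, map_add, ← map_ofNat (C : ℚ →+* ℚ⟦X⟧), coeff_C_mul, PF.coeff_mul',
      PF.coeff_DopIt, PF.coeff_Dop, Finset.sum_range_succ, Finset.sum_range_zero, map_zero] at e
    norm_num [PF.cA4_0, PF.cA4_1, PF.cA4_2, PF.cA4_3, PF.cA4_4, PF.cA4_5, PF.cA3_0, PF.cA3_1, PF.cA3_2, PF.cA3_3, PF.cA3_4, PF.cA3_5, PF.cA2_0, PF.cA2_1, PF.cA2_2, PF.cA2_3, PF.cA2_4, PF.cA2_5, PF.cA1_0, PF.cA1_1, PF.cA1_2, PF.cA1_3, PF.cA1_4, PF.cA1_5, PF.cA0_0, PF.cA0_1, PF.cA0_2, PF.cA0_3, PF.cA0_4, PF.cA0_5, hgc0, hgc1, hgc2, hgc3, hfc0, hfc1, hfc2, hfc3, hfc4, hfc5] at e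
    linarith [e]
  have hgc5 : coeff 5 g = ((219551517059 : ℚ)/6) := by
    have e := congrArg (coeff 5) hgPF
    simp only [L1, PF.L1p, map_add, ← map_ofNat (C : ℚ →+* ℚ⟦X⟧), coeff_C_mul, PF.coeff_mul',
      PF.coeff_DopIt, PF.coeff_Dop, Finset.sum_range_succ, Finset.sum_range_zero, map_zero] at e
    norm_num [PF.cA4_0, PF.cA4_1, PF.cA4_2, PF.cA4_3, PF.cA4_4, PF.cA4_5, PF.cA3_0, PF.cA3_1, PF.cA3_2, PF.cA3_3, PF.cA3_4, PF.cA3_5, PF.cA2_0, PF.cA2_1, PF.cA2_2, PF.cA2_3, PF.cA2_4, PF.cA2_5, PF.cA1_0, PF.cA1_1, PF.cA1_2, PF.cA1_3, PF.cA1_4, PF.cA1_5, PF.cA0_0, PF.cA0_1, PF.cA0_2, PF.cA0_3, PF.cA0_4, PF.cA0_5, hgc0, hgc1, hgc2, hgc3, hgc4, hfc0, hfc1, hfc2, hfc3, hfc4, hfc5] at e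
    linarith [e]
  have hfi0 : coeff 0 (f⁻¹) = 1 := by
    rw [coeff_zero_eq_constantCoeff, PowerSeries.constantCoeff_inv, hf₀]; norm_num
  have hfi1 : coeff 1 (f⁻¹) = ((-17) : ℚ) := by
    have e := congrArg (coeff 1) hfinv
    simp only [PF.coeff_mul', coeff_one, Finset.sum_range_succ, Finset.sum_range_zero] at e
    norm_num [hfi0, hfc0, hfc1, hfc2, hfc3, hfc4, hfc5] at e
    linarith [e]
  have hfi2 : coeff 2 (f⁻¹) = ((-1260) : ℚ) := by
    have e := congrArg (coeff 2) hfinv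
    simp only [PF.coeff_mul', coeff_one, Finset.sum_range_succ, Finset.sum_range_zero] at e
    norm_num [hfi0, hfi1, hfc0, hfc1, hfc2, hfc3, hfc4, hfc5] at e
    linarith [e]
  have hfi3 : coeff 3 (f⁻¹) = ((-167832) : ℚ) := by
    have e := congrArg (coeff 3) hfinv
    simp only [PF.coeff_mul', coeff_one, Finset.sum_range_succ, Finset.sum_range_zero] at e
    norm_num [hfi0, hfi1, hfi2, hfc0, hfc1, hfc2, hfc3, hfc4, hfc5] at e
    linarith [e]
  have hfi4 : coeff 4 (f⁻¹) = ((-28035672) : ℚ) := by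
    have e := congrArg (coeff 4) hfinv
    simp only [PF.coeff_mul', coeff_one, Finset.sum_range_succ, Finset.sum_range_zero] at e
    norm_num [hfi0, hfi1, hfi2, hfi3, hfc0, hfc1, hfc2, hfc3, hfc4, hfc5] at e
    linarith [e]
  have hfi5 : coeff 5 (f⁻¹) = ((-5293023708) : ℚ) := by
    have e := congrArg (coeff 5) hfinv
    simp only [PF.coeff_mul', coeff_one, Finset.sum_range_succ, Finset.sum_range_zero] at e
    norm_num [hfi0, hfi1, hfi2, hfi3, hfi4, hfc0, hfc1, hfc2, hfc3, hfc4, hfc5] at e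
    linarith [e]
  have hh0 : coeff 0 (g * f⁻¹) = (0 : ℚ) := by
    rw [PF.coeff_mul']
    simp only [Finset.sum_range_succ, Finset.sum_range_zero]
    norm_num [hgc0, hgc1, hgc2, hgc3, hgc4, hgc5, hfi0, hfi1, hfi2, hfi3, hfi4, hfi5]
  have hh1 : coeff 1 (g * f⁻¹) = (70 : ℚ) := by
    rw [PF.coeff_mul']
    simp only [Finset.sum_range_succ, Finset.sum_range_zero]
    norm_num [hgc0, hgc1, hgc2, hgc3, hgc4, hgc5, hfi0, hfi1, hfi2, hfi3, hfi4, hfi5]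
  have hh2 : coeff 2 (g * f⁻¹) = (6223 : ℚ) := by
    rw [PF.coeff_mul']
    simp only [Finset.sum_range_succ, Finset.sum_range_zero]
    norm_num [hgc0, hgc1, hgc2, hgc3, hgc4, hgc5, hfi0, hfi1, hfi2, hfi3, hfi4, hfi5]
  have hh3 : coeff 3 (g * f⁻¹) = ((2625910 : ℚ)/3) := by
    rw [PF.coeff_mul']
    simp only [Finset.sum_range_succ, Finset.sum_range_zero]
    norm_num [hgc0, hgc1, hgc2, hgc3, hgc4, hgc5, hfi0, hfi1, hfi2, hfi3, hfi4, hfi5]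
  have hh4 : coeff 4 (g * f⁻¹) = ((300236391 : ℚ)/2) := by
    rw [PF.coeff_mul']
    simp only [Finset.sum_range_succ, Finset.sum_range_zero]
    norm_num [hgc0, hgc1, hgc2, hgc3, hgc4, hgc5, hfi0, hfi1, hfi2, hfi3, hfi4, hfi5]
  have hh5 : coeff 5 (g * f⁻¹) = (28787094798 : ℚ) := by
    rw [PF.coeff_mul']
    simp only [Finset.sum_range_succ, Finset.sum_range_zero]
    norm_num [hgc0, hgc1, hgc2, hgc3, hgc4, hgc5, hfi0, hfi1, hfi2, hfi3, hfi4, hfi5]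
  have hhp1_0 : coeff 0 ((g * f⁻¹) ^ 1) = (0 : ℚ) := by rw [pow_one]; exact hh0
  have hhp1_1 : coeff 1 ((g * f⁻¹) ^ 1) = (70 : ℚ) := by rw [pow_one]; exact hh1
  have hhp1_2 : coeff 2 ((g * f⁻¹) ^ 1) = (6223 : ℚ) := by rw [pow_one]; exact hh2
  have hhp1_3 : coeff 3 ((g * f⁻¹) ^ 1) = ((2625910 : ℚ)/3) := by rw [pow_one]; exact hh3
  have hhp1_4 : coeff 4 ((g * f⁻¹) ^ 1) = ((300236391 : ℚ)/2) := by rw [pow_one]; exact hh4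
  have hhp2_0 : coeff 0 ((g * f⁻¹) ^ 2) = (0 : ℚ) := by
    rw [show (2:ℕ) = 1+1 from rfl, pow_succ, PF.coeff_mul']
    simp only [Finset.sum_range_succ, Finset.sum_range_zero]
    norm_num [hhp1_0, hh0]
  have hhp2_1 : coeff 1 ((g * f⁻¹) ^ 2) = (0 : ℚ) := by
    rw [show (2:ℕ) = 1+1 from rfl, pow_succ, PF.coeff_mul']
    simp only [Finset.sum_range_succ, Finset.sum_range_zero]
    norm_num [hhp1_0, hhp1_1, hh0, hh1]
  have hhp2_2 : coeff 2 ((g * f⁻¹) ^ 2) = (4900 : ℚ) := by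
    rw [show (2:ℕ) = 1+1 from rfl, pow_succ, PF.coeff_mul']
    simp only [Finset.sum_range_succ, Finset.sum_range_zero]
    norm_num [hhp1_0, hhp1_1, hhp1_2, hh0, hh1, hh2]
  have hhp2_3 : coeff 3 ((g * f⁻¹) ^ 2) = (871220 : ℚ) := by
    rw [show (2:ℕ) = 1+1 from rfl, pow_succ, PF.coeff_mul']
    simp only [Finset.sum_range_succ, Finset.sum_range_zero]
    norm_num [hhp1_0, hhp1_1, hhp1_2, hhp1_3, hh0, hh1, hh2, hh3]
  have hhp2_4 : coeff 4 ((g * f⁻¹) ^ 2) = ((483804587 : ℚ)/3) := by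
    rw [show (2:ℕ) = 1+1 from rfl, pow_succ, PF.coeff_mul']
    simp only [Finset.sum_range_succ, Finset.sum_range_zero]
    norm_num [hhp1_0, hhp1_1, hhp1_2, hhp1_3, hhp1_4, hh0, hh1, hh2, hh3, hh4]
  have hhp3_0 : coeff 0 ((g * f⁻¹) ^ 3) = (0 : ℚ) := by
    rw [show (3:ℕ) = 2+1 from rfl, pow_succ, PF.coeff_mul']
    simp only [Finset.sum_range_succ, Finset.sum_range_zero]
    norm_num [hhp2_0, hh0]
  have hhp3_1 : coeff 1 ((g * f⁻¹) ^ 3) = (0 : ℚ) := by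
    rw [show (3:ℕ) = 2+1 from rfl, pow_succ, PF.coeff_mul']
    simp only [Finset.sum_range_succ, Finset.sum_range_zero]
    norm_num [hhp2_0, hhp2_1, hh0, hh1]
  have hhp3_2 : coeff 2 ((g * f⁻¹) ^ 3) = (0 : ℚ) := by
    rw [show (3:ℕ) = 2+1 from rfl, pow_succ, PF.coeff_mul']
    simp only [Finset.sum_range_succ, Finset.sum_range_zero]
    norm_num [hhp2_0, hhp2_1, hhp2_2, hh0, hh1, hh2]
  have hhp3_3 : coeff 3 ((g * f⁻¹) ^ 3) = (343000 : ℚ) := by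
    rw [show (3:ℕ) = 2+1 from rfl, pow_succ, PF.coeff_mul']
    simp only [Finset.sum_range_succ, Finset.sum_range_zero]
    norm_num [hhp2_0, hhp2_1, hhp2_2, hhp2_3, hh0, hh1, hh2, hh3]
  have hhp3_4 : coeff 4 ((g * f⁻¹) ^ 3) = (91478100 : ℚ) := by
    rw [show (3:ℕ) = 2+1 from rfl, pow_succ, PF.coeff_mul']
    simp only [Finset.sum_range_succ, Finset.sum_range_zero]
    norm_num [hhp2_0, hhp2_1, hhp2_2, hhp2_3, hhp2_4, hh0, hh1, hh2, hh3, hh4]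
  have hhp4_0 : coeff 0 ((g * f⁻¹) ^ 4) = (0 : ℚ) := by
    rw [show (4:ℕ) = 3+1 from rfl, pow_succ, PF.coeff_mul']
    simp only [Finset.sum_range_succ, Finset.sum_range_zero]
    norm_num [hhp3_0, hh0]
  have hhp4_1 : coeff 1 ((g * f⁻¹) ^ 4) = (0 : ℚ) := by
    rw [show (4:ℕ) = 3+1 from rfl, pow_succ, PF.coeff_mul']
    simp only [Finset.sum_range_succ, Finset.sum_range_zero]
    norm_num [hhp3_0, hhp3_1, hh0, hh1]
  have hhp4_2 : coeff 2 ((g * f⁻¹) ^ 4) = (0 : ℚ) := by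
    rw [show (4:ℕ) = 3+1 from rfl, pow_succ, PF.coeff_mul']
    simp only [Finset.sum_range_succ, Finset.sum_range_zero]
    norm_num [hhp3_0, hhp3_1, hhp3_2, hh0, hh1, hh2]
  have hhp4_3 : coeff 3 ((g * f⁻¹) ^ 4) = (0 : ℚ) := by
    rw [show (4:ℕ) = 3+1 from rfl, pow_succ, PF.coeff_mul']
    simp only [Finset.sum_range_succ, Finset.sum_range_zero]
    norm_num [hhp3_0, hhp3_1, hhp3_2, hhp3_3, hh0, hh1, hh2, hh3]
  have hhp4_4 : coeff 4 ((g * f⁻¹) ^ 4) = (24010000 : ℚ) := by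
    rw [show (4:ℕ) = 3+1 from rfl, pow_succ, PF.coeff_mul']
    simp only [Finset.sum_range_succ, Finset.sum_range_zero]
    norm_num [hhp3_0, hhp3_1, hhp3_2, hhp3_3, hhp3_4, hh0, hh1, hh2, hh3, hh4]
  have hmu0 : coeff 0 (mirrorMap f g) = 0 := by
    rw [mirrorMap, coeff_zero_eq_constantCoeff, map_mul]; simp
  have hmu1 : coeff 1 (mirrorMap f g) = (1 : ℚ) := by
    rw [mirrorMap, show (1:ℕ) = 0+1 from rfl, coeff_succ_X_mul, PF.coeff_psComp]
    simp only [Finset.sum_range_succ, Finset.sum_range_zero]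
    norm_num [PF.cexp, Nat.factorial, pow_zero, coeff_one, hh0]
  have hmu2 : coeff 2 (mirrorMap f g) = (70 : ℚ) := by
    rw [mirrorMap, show (2:ℕ) = 1+1 from rfl, coeff_succ_X_mul, PF.coeff_psComp]
    simp only [Finset.sum_range_succ, Finset.sum_range_zero]
    norm_num [PF.cexp, Nat.factorial, pow_zero, coeff_one, hhp1_1, hh0, hh1]
  have hmu3 : coeff 3 (mirrorMap f g) = (8673 : ℚ) := by
    rw [mirrorMap, show (3:ℕ) = 2+1 from rfl, coeff_succ_X_mul, PF.coeff_psComp]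
    simp only [Finset.sum_range_succ, Finset.sum_range_zero]
    norm_num [PF.cexp, Nat.factorial, pow_zero, coeff_one, hhp1_2, hhp2_2, hh0, hh1, hh2]
  have hmu4 : coeff 4 (mirrorMap f g) = (1368080 : ℚ) := by
    rw [mirrorMap, show (4:ℕ) = 3+1 from rfl, coeff_succ_X_mul, PF.coeff_psComp]
    simp only [Finset.sum_range_succ, Finset.sum_range_zero]
    norm_num [PF.cexp, Nat.factorial, pow_zero, coeff_one, hhp1_3, hhp2_3, hhp3_3, hh0, hh1, hh2, hh3]
  have hmu5 : coeff 5 (mirrorMap f g) = (246999060 : ℚ) := by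
    rw [mirrorMap, show (5:ℕ) = 4+1 from rfl, coeff_succ_X_mul, PF.coeff_psComp]
    simp only [Finset.sum_range_succ, Finset.sum_range_zero]
    norm_num [PF.cexp, Nat.factorial, pow_zero, coeff_one, hhp1_4, hhp2_4, hhp3_4, hhp4_4, hh0, hh1, hh2, hh3, hh4]
  have hmup1_0 : coeff 0 ((mirrorMap f g) ^ 1) = (0 : ℚ) := by rw [pow_one]; exact hmu0
  have hmup1_1 : coeff 1 ((mirrorMap f g) ^ 1) = (1 : ℚ) := by rw [pow_one]; exact hmu1
  have hmup1_2 : coeff 2 ((mirrorMap f g) ^ 1) = (70 : ℚ) := by rw [pow_one]; exact hmu2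
  have hmup1_3 : coeff 3 ((mirrorMap f g) ^ 1) = (8673 : ℚ) := by rw [pow_one]; exact hmu3
  have hmup1_4 : coeff 4 ((mirrorMap f g) ^ 1) = (1368080 : ℚ) := by rw [pow_one]; exact hmu4
  have hmup1_5 : coeff 5 ((mirrorMap f g) ^ 1) = (246999060 : ℚ) := by rw [pow_one]; exact hmu5
  have hmup2_0 : coeff 0 ((mirrorMap f g) ^ 2) = (0 : ℚ) := by
    rw [show (2:ℕ) = 1+1 from rfl, pow_succ, PF.coeff_mul']
    simp only [Finset.sum_range_succ, Finset.sum_range_zero]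
    norm_num [hmup1_0, hmu0]
  have hmup2_1 : coeff 1 ((mirrorMap f g) ^ 2) = (0 : ℚ) := by
    rw [show (2:ℕ) = 1+1 from rfl, pow_succ, PF.coeff_mul']
    simp only [Finset.sum_range_succ, Finset.sum_range_zero]
    norm_num [hmup1_0, hmup1_1, hmu0, hmu1]
  have hmup2_2 : coeff 2 ((mirrorMap f g) ^ 2) = (1 : ℚ) := by
    rw [show (2:ℕ) = 1+1 from rfl, pow_succ, PF.coeff_mul']
    simp only [Finset.sum_range_succ, Finset.sum_range_zero]
    norm_num [hmup1_0, hmup1_1, hmup1_2, hmu0, hmu1, hmu2]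
  have hmup2_3 : coeff 3 ((mirrorMap f g) ^ 2) = (140 : ℚ) := by
    rw [show (2:ℕ) = 1+1 from rfl, pow_succ, PF.coeff_mul']
    simp only [Finset.sum_range_succ, Finset.sum_range_zero]
    norm_num [hmup1_0, hmup1_1, hmup1_2, hmup1_3, hmu0, hmu1, hmu2, hmu3]
  have hmup2_4 : coeff 4 ((mirrorMap f g) ^ 2) = (22246 : ℚ) := by
    rw [show (2:ℕ) = 1+1 from rfl, pow_succ, PF.coeff_mul']
    simp only [Finset.sum_range_succ, Finset.sum_range_zero]
    norm_num [hmup1_0, hmup1_1, hmup1_2, hmup1_3, hmup1_4, hmu0, hmu1, hmu2, hmu3, hmu4]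
  have hmup2_5 : coeff 5 ((mirrorMap f g) ^ 2) = (3950380 : ℚ) := by
    rw [show (2:ℕ) = 1+1 from rfl, pow_succ, PF.coeff_mul']
    simp only [Finset.sum_range_succ, Finset.sum_range_zero]
    norm_num [hmup1_0, hmup1_1, hmup1_2, hmup1_3, hmup1_4, hmup1_5, hmu0, hmu1, hmu2, hmu3, hmu4, hmu5]
  have hmup3_0 : coeff 0 ((mirrorMap f g) ^ 3) = (0 : ℚ) := by
    rw [show (3:ℕ) = 2+1 from rfl, pow_succ, PF.coeff_mul']
    simp only [Finset.sum_range_succ, Finset.sum_range_zero]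
    norm_num [hmup2_0, hmu0]
  have hmup3_1 : coeff 1 ((mirrorMap f g) ^ 3) = (0 : ℚ) := by
    rw [show (3:ℕ) = 2+1 from rfl, pow_succ, PF.coeff_mul']
    simp only [Finset.sum_range_succ, Finset.sum_range_zero]
    norm_num [hmup2_0, hmup2_1, hmu0, hmu1]
  have hmup3_2 : coeff 2 ((mirrorMap f g) ^ 3) = (0 : ℚ) := by
    rw [show (3:ℕ) = 2+1 from rfl, pow_succ, PF.coeff_mul']
    simp only [Finset.sum_range_succ, Finset.sum_range_zero]
    norm_num [hmup2_0, hmup2_1, hmup2_2, hmu0, hmu1, hmu2]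
  have hmup3_3 : coeff 3 ((mirrorMap f g) ^ 3) = (1 : ℚ) := by
    rw [show (3:ℕ) = 2+1 from rfl, pow_succ, PF.coeff_mul']
    simp only [Finset.sum_range_succ, Finset.sum_range_zero]
    norm_num [hmup2_0, hmup2_1, hmup2_2, hmup2_3, hmu0, hmu1, hmu2, hmu3]
  have hmup3_4 : coeff 4 ((mirrorMap f g) ^ 3) = (210 : ℚ) := by
    rw [show (3:ℕ) = 2+1 from rfl, pow_succ, PF.coeff_mul']
    simp only [Finset.sum_range_succ, Finset.sum_range_zero]
    norm_num [hmup2_0, hmup2_1, hmup2_2, hmup2_3, hmup2_4, hmu0, hmu1, hmu2, hmu3, hmu4]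
  have hmup3_5 : coeff 5 ((mirrorMap f g) ^ 3) = (40719 : ℚ) := by
    rw [show (3:ℕ) = 2+1 from rfl, pow_succ, PF.coeff_mul']
    simp only [Finset.sum_range_succ, Finset.sum_range_zero]
    norm_num [hmup2_0, hmup2_1, hmup2_2, hmup2_3, hmup2_4, hmup2_5, hmu0, hmu1, hmu2, hmu3, hmu4, hmu5]
  have hmup4_0 : coeff 0 ((mirrorMap f g) ^ 4) = (0 : ℚ) := by
    rw [show (4:ℕ) = 3+1 from rfl, pow_succ, PF.coeff_mul']
    simp only [Finset.sum_range_succ, Finset.sum_range_zero]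
    norm_num [hmup3_0, hmu0]
  have hmup4_1 : coeff 1 ((mirrorMap f g) ^ 4) = (0 : ℚ) := by
    rw [show (4:ℕ) = 3+1 from rfl, pow_succ, PF.coeff_mul']
    simp only [Finset.sum_range_succ, Finset.sum_range_zero]
    norm_num [hmup3_0, hmup3_1, hmu0, hmu1]
  have hmup4_2 : coeff 2 ((mirrorMap f g) ^ 4) = (0 : ℚ) := by
    rw [show (4:ℕ) = 3+1 from rfl, pow_succ, PF.coeff_mul']
    simp only [Finset.sum_range_succ, Finset.sum_range_zero]
    norm_num [hmup3_0, hmup3_1, hmup3_2, hmu0, hmu1, hmu2]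
  have hmup4_3 : coeff 3 ((mirrorMap f g) ^ 4) = (0 : ℚ) := by
    rw [show (4:ℕ) = 3+1 from rfl, pow_succ, PF.coeff_mul']
    simp only [Finset.sum_range_succ, Finset.sum_range_zero]
    norm_num [hmup3_0, hmup3_1, hmup3_2, hmup3_3, hmu0, hmu1, hmu2, hmu3]
  have hmup4_4 : coeff 4 ((mirrorMap f g) ^ 4) = (1 : ℚ) := by
    rw [show (4:ℕ) = 3+1 from rfl, pow_succ, PF.coeff_mul']
    simp only [Finset.sum_range_succ, Finset.sum_range_zero]
    norm_num [hmup3_0, hmup3_1, hmup3_2, hmup3_3, hmup3_4, hmu0, hmu1, hmu2, hmu3, hmu4]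
  have hmup4_5 : coeff 5 ((mirrorMap f g) ^ 4) = (280 : ℚ) := by
    rw [show (4:ℕ) = 3+1 from rfl, pow_succ, PF.coeff_mul']
    simp only [Finset.sum_range_succ, Finset.sum_range_zero]
    norm_num [hmup3_0, hmup3_1, hmup3_2, hmup3_3, hmup3_4, hmup3_5, hmu0, hmu1, hmu2, hmu3, hmu4, hmu5]
  have hmup5_0 : coeff 0 ((mirrorMap f g) ^ 5) = (0 : ℚ) := by
    rw [show (5:ℕ) = 4+1 from rfl, pow_succ, PF.coeff_mul']
    simp only [Finset.sum_range_succ, Finset.sum_range_zero]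
    norm_num [hmup4_0, hmu0]
  have hmup5_1 : coeff 1 ((mirrorMap f g) ^ 5) = (0 : ℚ) := by
    rw [show (5:ℕ) = 4+1 from rfl, pow_succ, PF.coeff_mul']
    simp only [Finset.sum_range_succ, Finset.sum_range_zero]
    norm_num [hmup4_0, hmup4_1, hmu0, hmu1]
  have hmup5_2 : coeff 2 ((mirrorMap f g) ^ 5) = (0 : ℚ) := by
    rw [show (5:ℕ) = 4+1 from rfl, pow_succ, PF.coeff_mul']
    simp only [Finset.sum_range_succ, Finset.sum_range_zero]
    norm_num [hmup4_0, hmup4_1, hmup4_2, hmu0, hmu1, hmu2]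
  have hmup5_3 : coeff 3 ((mirrorMap f g) ^ 5) = (0 : ℚ) := by
    rw [show (5:ℕ) = 4+1 from rfl, pow_succ, PF.coeff_mul']
    simp only [Finset.sum_range_succ, Finset.sum_range_zero]
    norm_num [hmup4_0, hmup4_1, hmup4_2, hmup4_3, hmu0, hmu1, hmu2, hmu3]
  have hmup5_4 : coeff 4 ((mirrorMap f g) ^ 5) = (0 : ℚ) := by
    rw [show (5:ℕ) = 4+1 from rfl, pow_succ, PF.coeff_mul']
    simp only [Finset.sum_range_succ, Finset.sum_range_zero]
    norm_num [hmup4_0, hmup4_1, hmup4_2, hmup4_3, hmup4_4, hmu0, hmu1, hmu2, hmu3, hmu4]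
  have hmup5_5 : coeff 5 ((mirrorMap f g) ^ 5) = (1 : ℚ) := by
    rw [show (5:ℕ) = 4+1 from rfl, pow_succ, PF.coeff_mul']
    simp only [Finset.sum_range_succ, Finset.sum_range_zero]
    norm_num [hmup4_0, hmup4_1, hmup4_2, hmup4_3, hmup4_4, hmup4_5, hmu0, hmu1, hmu2, hmu3, hmu4, hmu5]
  have hnuc0 : coeff 0 nu = 0 := by rw [coeff_zero_eq_constantCoeff]; exact hnu₀
  have hnuc1 : coeff 1 nu = (1 : ℚ) := by
    have e := congrArg (coeff 1) hnu
    rw [PF.coeff_psComp] at e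
    simp only [Finset.sum_range_succ, Finset.sum_range_zero] at e
    norm_num [coeff_X, pow_zero, coeff_one, hnuc0, hmu0, hmu1, hmu2, hmu3, hmu4, hmu5, hmup1_1, hnuc0] at e
    linarith [e]
  have hnuc2 : coeff 2 nu = ((-70) : ℚ) := by
    have e := congrArg (coeff 2) hnu
    rw [PF.coeff_psComp] at e
    simp only [Finset.sum_range_succ, Finset.sum_range_zero] at e
    norm_num [coeff_X, pow_zero, coeff_one, hnuc0, hmu0, hmu1, hmu2, hmu3, hmu4, hmu5, hmup1_2, hmup2_2, hnuc0, hnuc1] at e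
    linarith [e]
  have hnuc3 : coeff 3 nu = (1127 : ℚ) := by
    have e := congrArg (coeff 3) hnu
    rw [PF.coeff_psComp] at e
    simp only [Finset.sum_range_succ, Finset.sum_range_zero] at e
    norm_num [coeff_X, pow_zero, coeff_one, hnuc0, hmu0, hmu1, hmu2, hmu3, hmu4, hmu5, hmup1_3, hmup2_3, hmup3_3, hnuc0, hnuc1, hnuc2] at e
    linarith [e]
  have hnuc4 : coeff 4 nu = ((-47530) : ℚ) := by
    have e := congrArg (coeff 4) hnu
    rw [PF.coeff_psComp] at e
    simp only [Finset.sum_range_succ, Finset.sum_range_zero] at e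
    norm_num [coeff_X, pow_zero, coeff_one, hnuc0, hmu0, hmu1, hmu2, hmu3, hmu4, hmu5, hmup1_4, hmup2_4, hmup3_4, hmup4_4, hnuc0, hnuc1, hnuc2, hnuc3] at e
    linarith [e]
  have hnuc5 : coeff 5 nu = ((-3054373) : ℚ) := by
    have e := congrArg (coeff 5) hnu
    rw [PF.coeff_psComp] at e
    simp only [Finset.sum_range_succ, Finset.sum_range_zero] at e
    norm_num [coeff_X, pow_zero, coeff_one, hnuc0, hmu0, hmu1, hmu2, hmu3, hmu4, hmu5, hmup1_5, hmup2_5, hmup3_5, hmup4_5, hmup5_5, hnuc0, hnuc1, hnuc2, hnuc3, hnuc4] at e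
    linarith [e]
  have hnup1_0 : coeff 0 ((nu) ^ 1) = (0 : ℚ) := by rw [pow_one]; exact hnuc0
  have hnup1_1 : coeff 1 ((nu) ^ 1) = (1 : ℚ) := by rw [pow_one]; exact hnuc1
  have hnup1_2 : coeff 2 ((nu) ^ 1) = ((-70) : ℚ) := by rw [pow_one]; exact hnuc2
  have hnup1_3 : coeff 3 ((nu) ^ 1) = (1127 : ℚ) := by rw [pow_one]; exact hnuc3
  have hnup1_4 : coeff 4 ((nu) ^ 1) = ((-47530) : ℚ) := by rw [pow_one]; exact hnuc4
  have hnup1_5 : coeff 5 ((nu) ^ 1) = ((-3054373) : ℚ) := by rw [pow_one]; exact hnuc5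
  have hnup2_0 : coeff 0 ((nu) ^ 2) = (0 : ℚ) := by
    rw [show (2:ℕ) = 1+1 from rfl, pow_succ, PF.coeff_mul']
    simp only [Finset.sum_range_succ, Finset.sum_range_zero]
    norm_num [hnup1_0, hnuc0]
  have hnup2_1 : coeff 1 ((nu) ^ 2) = (0 : ℚ) := by
    rw [show (2:ℕ) = 1+1 from rfl, pow_succ, PF.coeff_mul']
    simp only [Finset.sum_range_succ, Finset.sum_range_zero]
    norm_num [hnup1_0, hnup1_1, hnuc0, hnuc1]
  have hnup2_2 : coeff 2 ((nu) ^ 2) = (1 : ℚ) := by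
    rw [show (2:ℕ) = 1+1 from rfl, pow_succ, PF.coeff_mul']
    simp only [Finset.sum_range_succ, Finset.sum_range_zero]
    norm_num [hnup1_0, hnup1_1, hnup1_2, hnuc0, hnuc1, hnuc2]
  have hnup2_3 : coeff 3 ((nu) ^ 2) = ((-140) : ℚ) := by
    rw [show (2:ℕ) = 1+1 from rfl, pow_succ, PF.coeff_mul']
    simp only [Finset.sum_range_succ, Finset.sum_range_zero]
    norm_num [hnup1_0, hnup1_1, hnup1_2, hnup1_3, hnuc0, hnuc1, hnuc2, hnuc3]
  have hnup2_4 : coeff 4 ((nu) ^ 2) = (7154 : ℚ) := by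
    rw [show (2:ℕ) = 1+1 from rfl, pow_succ, PF.coeff_mul']
    simp only [Finset.sum_range_succ, Finset.sum_range_zero]
    norm_num [hnup1_0, hnup1_1, hnup1_2, hnup1_3, hnup1_4, hnuc0, hnuc1, hnuc2, hnuc3, hnuc4]
  have hnup2_5 : coeff 5 ((nu) ^ 2) = ((-252840) : ℚ) := by
    rw [show (2:ℕ) = 1+1 from rfl, pow_succ, PF.coeff_mul']
    simp only [Finset.sum_range_succ, Finset.sum_range_zero]
    norm_num [hnup1_0, hnup1_1, hnup1_2, hnup1_3, hnup1_4, hnup1_5, hnuc0, hnuc1, hnuc2, hnuc3, hnuc4, hnuc5]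
  have hnup3_0 : coeff 0 ((nu) ^ 3) = (0 : ℚ) := by
    rw [show (3:ℕ) = 2+1 from rfl, pow_succ, PF.coeff_mul']
    simp only [Finset.sum_range_succ, Finset.sum_range_zero]
    norm_num [hnup2_0, hnuc0]
  have hnup3_1 : coeff 1 ((nu) ^ 3) = (0 : ℚ) := by
    rw [show (3:ℕ) = 2+1 from rfl, pow_succ, PF.coeff_mul']
    simp only [Finset.sum_range_succ, Finset.sum_range_zero]
    norm_num [hnup2_0, hnup2_1, hnuc0, hnuc1]
  have hnup3_2 : coeff 2 ((nu) ^ 3) = (0 : ℚ) := by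
    rw [show (3:ℕ) = 2+1 from rfl, pow_succ, PF.coeff_mul']
    simp only [Finset.sum_range_succ, Finset.sum_range_zero]
    norm_num [hnup2_0, hnup2_1, hnup2_2, hnuc0, hnuc1, hnuc2]
  have hnup3_3 : coeff 3 ((nu) ^ 3) = (1 : ℚ) := by
    rw [show (3:ℕ) = 2+1 from rfl, pow_succ, PF.coeff_mul']
    simp only [Finset.sum_range_succ, Finset.sum_range_zero]
    norm_num [hnup2_0, hnup2_1, hnup2_2, hnup2_3, hnuc0, hnuc1, hnuc2, hnuc3]
  have hnup3_4 : coeff 4 ((nu) ^ 3) = ((-210) : ℚ) := by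
    rw [show (3:ℕ) = 2+1 from rfl, pow_succ, PF.coeff_mul']
    simp only [Finset.sum_range_succ, Finset.sum_range_zero]
    norm_num [hnup2_0, hnup2_1, hnup2_2, hnup2_3, hnup2_4, hnuc0, hnuc1, hnuc2, hnuc3, hnuc4]
  have hnup3_5 : coeff 5 ((nu) ^ 3) = (18081 : ℚ) := by
    rw [show (3:ℕ) = 2+1 from rfl, pow_succ, PF.coeff_mul']
    simp only [Finset.sum_range_succ, Finset.sum_range_zero]
    norm_num [hnup2_0, hnup2_1, hnup2_2, hnup2_3, hnup2_4, hnup2_5, hnuc0, hnuc1, hnuc2, hnuc3, hnuc4, hnuc5]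
  have hnup4_0 : coeff 0 ((nu) ^ 4) = (0 : ℚ) := by
    rw [show (4:ℕ) = 3+1 from rfl, pow_succ, PF.coeff_mul']
    simp only [Finset.sum_range_succ, Finset.sum_range_zero]
    norm_num [hnup3_0, hnuc0]
  have hnup4_1 : coeff 1 ((nu) ^ 4) = (0 : ℚ) := by
    rw [show (4:ℕ) = 3+1 from rfl, pow_succ, PF.coeff_mul']
    simp only [Finset.sum_range_succ, Finset.sum_range_zero]
    norm_num [hnup3_0, hnup3_1, hnuc0, hnuc1]
  have hnup4_2 : coeff 2 ((nu) ^ 4) = (0 : ℚ) := by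
    rw [show (4:ℕ) = 3+1 from rfl, pow_succ, PF.coeff_mul']
    simp only [Finset.sum_range_succ, Finset.sum_range_zero]
    norm_num [hnup3_0, hnup3_1, hnup3_2, hnuc0, hnuc1, hnuc2]
  have hnup4_3 : coeff 3 ((nu) ^ 4) = (0 : ℚ) := by
    rw [show (4:ℕ) = 3+1 from rfl, pow_succ, PF.coeff_mul']
    simp only [Finset.sum_range_succ, Finset.sum_range_zero]
    norm_num [hnup3_0, hnup3_1, hnup3_2, hnup3_3, hnuc0, hnuc1, hnuc2, hnuc3]
  have hnup4_4 : coeff 4 ((nu) ^ 4) = (1 : ℚ) := by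
    rw [show (4:ℕ) = 3+1 from rfl, pow_succ, PF.coeff_mul']
    simp only [Finset.sum_range_succ, Finset.sum_range_zero]
    norm_num [hnup3_0, hnup3_1, hnup3_2, hnup3_3, hnup3_4, hnuc0, hnuc1, hnuc2, hnuc3, hnuc4]
  have hnup4_5 : coeff 5 ((nu) ^ 4) = ((-280) : ℚ) := by
    rw [show (4:ℕ) = 3+1 from rfl, pow_succ, PF.coeff_mul']
    simp only [Finset.sum_range_succ, Finset.sum_range_zero]
    norm_num [hnup3_0, hnup3_1, hnup3_2, hnup3_3, hnup3_4, hnup3_5, hnuc0, hnuc1, hnuc2, hnuc3, hnuc4, hnuc5]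
  have hnup5_0 : coeff 0 ((nu) ^ 5) = (0 : ℚ) := by
    rw [show (5:ℕ) = 4+1 from rfl, pow_succ, PF.coeff_mul']
    simp only [Finset.sum_range_succ, Finset.sum_range_zero]
    norm_num [hnup4_0, hnuc0]
  have hnup5_1 : coeff 1 ((nu) ^ 5) = (0 : ℚ) := by
    rw [show (5:ℕ) = 4+1 from rfl, pow_succ, PF.coeff_mul']
    simp only [Finset.sum_range_succ, Finset.sum_range_zero]
    norm_num [hnup4_0, hnup4_1, hnuc0, hnuc1]
  have hnup5_2 : coeff 2 ((nu) ^ 5) = (0 : ℚ) := by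
    rw [show (5:ℕ) = 4+1 from rfl, pow_succ, PF.coeff_mul']
    simp only [Finset.sum_range_succ, Finset.sum_range_zero]
    norm_num [hnup4_0, hnup4_1, hnup4_2, hnuc0, hnuc1, hnuc2]
  have hnup5_3 : coeff 3 ((nu) ^ 5) = (0 : ℚ) := by
    rw [show (5:ℕ) = 4+1 from rfl, pow_succ, PF.coeff_mul']
    simp only [Finset.sum_range_succ, Finset.sum_range_zero]
    norm_num [hnup4_0, hnup4_1, hnup4_2, hnup4_3, hnuc0, hnuc1, hnuc2, hnuc3]
  have hnup5_4 : coeff 4 ((nu) ^ 5) = (0 : ℚ) := by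
    rw [show (5:ℕ) = 4+1 from rfl, pow_succ, PF.coeff_mul']
    simp only [Finset.sum_range_succ, Finset.sum_range_zero]
    norm_num [hnup4_0, hnup4_1, hnup4_2, hnup4_3, hnup4_4, hnuc0, hnuc1, hnuc2, hnuc3, hnuc4]
  have hnup5_5 : coeff 5 ((nu) ^ 5) = (1 : ℚ) := by
    rw [show (5:ℕ) = 4+1 from rfl, pow_succ, PF.coeff_mul']
    simp only [Finset.sum_range_succ, Finset.sum_range_zero]
    norm_num [hnup4_0, hnup4_1, hnup4_2, hnup4_3, hnup4_4, hnup4_5, hnuc0, hnuc1, hnuc2, hnuc3, hnuc4, hnuc5]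
  have hrc1 : coeff 1 r = (84 : ℚ) := by
    rw [hr_def]
    simp only [map_neg, map_add, PF.L1pp, PF.L1p, ← map_ofNat (C : ℚ →+* ℚ⟦X⟧), coeff_C_mul,
      PF.coeff_mul', PF.coeff_DopIt, PF.coeff_Dop, Finset.sum_range_succ, Finset.sum_range_zero] at *
    norm_num [PF.cA4_0, PF.cA4_1, PF.cA4_2, PF.cA4_3, PF.cA4_4, PF.cA4_5, PF.cA3_0, PF.cA3_1, PF.cA3_2, PF.cA3_3, PF.cA3_4, PF.cA3_5, PF.cA2_0, PF.cA2_1, PF.cA2_2, PF.cA2_3, PF.cA2_4, PF.cA2_5, PF.cA1_0, PF.cA1_1, PF.cA1_2, PF.cA1_3, PF.cA1_4, PF.cA1_5, PF.cA0_0, PF.cA0_1, PF.cA0_2, PF.cA0_3, PF.cA0_4, PF.cA0_5, hfc0, hfc1, hfc2, hfc3, hfc4, hfc5, hgc0, hgc1, hgc2, hgc3, hgc4, hgc5]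
  have hrc2 : coeff 2 r = (129528 : ℚ) := by
    rw [hr_def]
    simp only [map_neg, map_add, PF.L1pp, PF.L1p, ← map_ofNat (C : ℚ →+* ℚ⟦X⟧), coeff_C_mul,
      PF.coeff_mul', PF.coeff_DopIt, PF.coeff_Dop, Finset.sum_range_succ, Finset.sum_range_zero] at *
    norm_num [PF.cA4_0, PF.cA4_1, PF.cA4_2, PF.cA4_3, PF.cA4_4, PF.cA4_5, PF.cA3_0, PF.cA3_1, PF.cA3_2, PF.cA3_3, PF.cA3_4, PF.cA3_5, PF.cA2_0, PF.cA2_1, PF.cA2_2, PF.cA2_3, PF.cA2_4, PF.cA2_5, PF.cA1_0, PF.cA1_1, PF.cA1_2, PF.cA1_3, PF.cA1_4, PF.cA1_5, PF.cA0_0, PF.cA0_1, PF.cA0_2, PF.cA0_3, PF.cA0_4, PF.cA0_5, hfc0, hfc1, hfc2, hfc3, hfc4, hfc5, hgc0, hgc1, hgc2, hgc3, hgc4, hgc5]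
  have hrc3 : coeff 3 r = (42537264 : ℚ) := by
    rw [hr_def]
    simp only [map_neg, map_add, PF.L1pp, PF.L1p, ← map_ofNat (C : ℚ →+* ℚ⟦X⟧), coeff_C_mul,
      PF.coeff_mul', PF.coeff_DopIt, PF.coeff_Dop, Finset.sum_range_succ, Finset.sum_range_zero] at *
    norm_num [PF.cA4_0, PF.cA4_1, PF.cA4_2, PF.cA4_3, PF.cA4_4, PF.cA4_5, PF.cA3_0, PF.cA3_1, PF.cA3_2, PF.cA3_3, PF.cA3_4, PF.cA3_5, PF.cA2_0, PF.cA2_1, PF.cA2_2, PF.cA2_3, PF.cA2_4, PF.cA2_5, PF.cA1_0, PF.cA1_1, PF.cA1_2, PF.cA1_3, PF.cA1_4, PF.cA1_5, PF.cA0_0, PF.cA0_1, PF.cA0_2, PF.cA0_3, PF.cA0_4, PF.cA0_5, hfc0, hfc1, hfc2, hfc3, hfc4, hfc5, hgc0, hgc1, hgc2, hgc3, hgc4, hgc5]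
  have hrc4 : coeff 4 r = ((38697359624 : ℚ)/3) := by
    rw [hr_def]
    simp only [map_neg, map_add, PF.L1pp, PF.L1p, ← map_ofNat (C : ℚ →+* ℚ⟦X⟧), coeff_C_mul,
      PF.coeff_mul', PF.coeff_DopIt, PF.coeff_Dop, Finset.sum_range_succ, Finset.sum_range_zero] at *
    norm_num [PF.cA4_0, PF.cA4_1, PF.cA4_2, PF.cA4_3, PF.cA4_4, PF.cA4_5, PF.cA3_0, PF.cA3_1, PF.cA3_2, PF.cA3_3, PF.cA3_4, PF.cA3_5, PF.cA2_0, PF.cA2_1, PF.cA2_2, PF.cA2_3, PF.cA2_4, PF.cA2_5, PF.cA1_0, PF.cA1_1, PF.cA1_2, PF.cA1_3, PF.cA1_4, PF.cA1_5, PF.cA0_0, PF.cA0_1, PF.cA0_2, PF.cA0_3, PF.cA0_4, PF.cA0_5, hfc0, hfc1, hfc2, hfc3, hfc4, hfc5, hgc0, hgc1, hgc2, hgc3, hgc4, hgc5]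
  have hrc5 : coeff 5 r = (3832263657838 : ℚ) := by
    rw [hr_def]
    simp only [map_neg, map_add, PF.L1pp, PF.L1p, ← map_ofNat (C : ℚ →+* ℚ⟦X⟧), coeff_C_mul,
      PF.coeff_mul', PF.coeff_DopIt, PF.coeff_Dop, Finset.sum_range_succ, Finset.sum_range_zero] at *
    norm_num [PF.cA4_0, PF.cA4_1, PF.cA4_2, PF.cA4_3, PF.cA4_4, PF.cA4_5, PF.cA3_0, PF.cA3_1, PF.cA3_2, PF.cA3_3, PF.cA3_4, PF.cA3_5, PF.cA2_0, PF.cA2_1, PF.cA2_2, PF.cA2_3, PF.cA2_4, PF.cA2_5, PF.cA1_0, PF.cA1_1, PF.cA1_2, PF.cA1_3, PF.cA1_4, PF.cA1_5, PF.cA0_0, PF.cA0_1, PF.cA0_2, PF.cA0_3, PF.cA0_4, PF.cA0_5, hfc0, hfc1, hfc2, hfc3, hfc4, hfc5, hgc0, hgc1, hgc2, hgc3, hgc4, hgc5]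
  have hws0 : PF.wseq r 0 = 0 := PF.wseq_zero r
  have hws1 : PF.wseq r 1 = (84 : ℚ) := by
    rw [show (1:ℕ) = 0+1 from rfl, PF.wseq_succ]
    simp only [Finset.sum_range_succ, Finset.sum_range_zero]
    norm_num [PF.Bc, PF.cA4_0, PF.cA4_1, PF.cA4_2, PF.cA4_3, PF.cA4_4, PF.cA4_5, PF.cA3_0, PF.cA3_1, PF.cA3_2, PF.cA3_3, PF.cA3_4, PF.cA3_5, PF.cA2_0, PF.cA2_1, PF.cA2_2, PF.cA2_3, PF.cA2_4, PF.cA2_5, PF.cA1_0, PF.cA1_1, PF.cA1_2, PF.cA1_3, PF.cA1_4, PF.cA1_5, PF.cA0_0, PF.cA0_1, PF.cA0_2, PF.cA0_3, PF.cA0_4, PF.cA0_5, hws0, hrc1]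
  have hws2 : PF.wseq r 2 = (15687 : ℚ) := by
    rw [show (2:ℕ) = 1+1 from rfl, PF.wseq_succ]
    simp only [Finset.sum_range_succ, Finset.sum_range_zero]
    norm_num [PF.Bc, PF.cA4_0, PF.cA4_1, PF.cA4_2, PF.cA4_3, PF.cA4_4, PF.cA4_5, PF.cA3_0, PF.cA3_1, PF.cA3_2, PF.cA3_3, PF.cA3_4, PF.cA3_5, PF.cA2_0, PF.cA2_1, PF.cA2_2, PF.cA2_3, PF.cA2_4, PF.cA2_5, PF.cA1_0, PF.cA1_1, PF.cA1_2, PF.cA1_3, PF.cA1_4, PF.cA1_5, PF.cA0_0, PF.cA0_1, PF.cA0_2, PF.cA0_3, PF.cA0_4, PF.cA0_5, hws0, hws1, hrc2]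
  have hws3 : PF.wseq r 3 = ((8128729 : ℚ)/3) := by
    rw [show (3:ℕ) = 2+1 from rfl, PF.wseq_succ]
    simp only [Finset.sum_range_succ, Finset.sum_range_zero]
    norm_num [PF.Bc, PF.cA4_0, PF.cA4_1, PF.cA4_2, PF.cA4_3, PF.cA4_4, PF.cA4_5, PF.cA3_0, PF.cA3_1, PF.cA3_2, PF.cA3_3, PF.cA3_4, PF.cA3_5, PF.cA2_0, PF.cA2_1, PF.cA2_2, PF.cA2_3, PF.cA2_4, PF.cA2_5, PF.cA1_0, PF.cA1_1, PF.cA1_2, PF.cA1_3, PF.cA1_4, PF.cA1_5, PF.cA0_0, PF.cA0_1, PF.cA0_2, PF.cA0_3, PF.cA0_4, PF.cA0_5, hws0, hws1, hws2, hrc3]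
  have hws4 : PF.wseq r 4 = ((6116318845 : ℚ)/12) := by
    rw [show (4:ℕ) = 3+1 from rfl, PF.wseq_succ]
    simp only [Finset.sum_range_succ, Finset.sum_range_zero]
    norm_num [PF.Bc, PF.cA4_0, PF.cA4_1, PF.cA4_2, PF.cA4_3, PF.cA4_4, PF.cA4_5, PF.cA3_0, PF.cA3_1, PF.cA3_2, PF.cA3_3, PF.cA3_4, PF.cA3_5, PF.cA2_0, PF.cA2_1, PF.cA2_2, PF.cA2_3, PF.cA2_4, PF.cA2_5, PF.cA1_0, PF.cA1_1, PF.cA1_2, PF.cA1_3, PF.cA1_4, PF.cA1_5, PF.cA0_0, PF.cA0_1, PF.cA0_2, PF.cA0_3, PF.cA0_4, PF.cA0_5, hws0, hws1, hws2, hws3, hrc4]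
  have hws5 : PF.wseq r 5 = ((30856223286133 : ℚ)/300) := by
    rw [show (5:ℕ) = 4+1 from rfl, PF.wseq_succ]
    simp only [Finset.sum_range_succ, Finset.sum_range_zero]
    norm_num [PF.Bc, PF.cA4_0, PF.cA4_1, PF.cA4_2, PF.cA4_3, PF.cA4_4, PF.cA4_5, PF.cA3_0, PF.cA3_1, PF.cA3_2, PF.cA3_3, PF.cA3_4, PF.cA3_5, PF.cA2_0, PF.cA2_1, PF.cA2_2, PF.cA2_3, PF.cA2_4, PF.cA2_5, PF.cA1_0, PF.cA1_1, PF.cA1_2, PF.cA1_3, PF.cA1_4, PF.cA1_5, PF.cA0_0, PF.cA0_1, PF.cA0_2, PF.cA0_3, PF.cA0_4, PF.cA0_5, hws0, hws1, hws2, hws3, hws4, hrc5]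
  have hwc0 : coeff 0 w = (0 : ℚ) := by rw [hw_def, coeff_mk]; exact hws0
  have hwc1 : coeff 1 w = (84 : ℚ) := by rw [hw_def, coeff_mk]; exact hws1
  have hwc2 : coeff 2 w = (15687 : ℚ) := by rw [hw_def, coeff_mk]; exact hws2
  have hwc3 : coeff 3 w = ((8128729 : ℚ)/3) := by rw [hw_def, coeff_mk]; exact hws3
  have hwc4 : coeff 4 w = ((6116318845 : ℚ)/12) := by rw [hw_def, coeff_mk]; exact hws4
  have hwc5 : coeff 5 w = ((30856223286133 : ℚ)/300) := by rw [hw_def, coeff_mk]; exact hws5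
  have hwf0 : coeff 0 (w * f⁻¹) = (0 : ℚ) := by
    rw [PF.coeff_mul']
    simp only [Finset.sum_range_succ, Finset.sum_range_zero]
    norm_num [hwc0, hwc1, hwc2, hwc3, hwc4, hwc5, hfi0, hfi1, hfi2, hfi3, hfi4, hfi5]
  have hwf1 : coeff 1 (w * f⁻¹) = (84 : ℚ) := by
    rw [PF.coeff_mul']
    simp only [Finset.sum_range_succ, Finset.sum_range_zero]
    norm_num [hwc0, hwc1, hwc2, hwc3, hwc4, hwc5, hfi0, hfi1, hfi2, hfi3, hfi4, hfi5]
  have hwf2 : coeff 2 (w * f⁻¹) = (14259 : ℚ) := by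
    rw [PF.coeff_mul']
    simp only [Finset.sum_range_succ, Finset.sum_range_zero]
    norm_num [hwc0, hwc1, hwc2, hwc3, hwc4, hwc5, hfi0, hfi1, hfi2, hfi3, hfi4, hfi5]
  have hwf3 : coeff 3 (w * f⁻¹) = ((7011172 : ℚ)/3) := by
    rw [PF.coeff_mul']
    simp only [Finset.sum_range_succ, Finset.sum_range_zero]
    norm_num [hwc0, hwc1, hwc2, hwc3, hwc4, hwc5, hfi0, hfi1, hfi2, hfi3, hfi4, hfi5]
  have hwf4 : coeff 4 (w * f⁻¹) = ((5157203177 : ℚ)/12) := by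
    rw [PF.coeff_mul']
    simp only [Finset.sum_range_succ, Finset.sum_range_zero]
    norm_num [hwc0, hwc1, hwc2, hwc3, hwc4, hwc5, hfi0, hfi1, hfi2, hfi3, hfi4, hfi5]
  have hwf5 : coeff 5 (w * f⁻¹) = ((6434058703352 : ℚ)/75) := by
    rw [PF.coeff_mul']
    simp only [Finset.sum_range_succ, Finset.sum_range_zero]
    norm_num [hwc0, hwc1, hwc2, hwc3, hwc4, hwc5, hfi0, hfi1, hfi2, hfi3, hfi4, hfi5]
  have hH0 : coeff 0 H = (0 : ℚ) := by
    rw [hH_def, PF.coeff_psComp]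
    simp only [Finset.sum_range_succ, Finset.sum_range_zero]
    norm_num [pow_zero, coeff_one, hh0, hnuc0, hnuc1, hnuc2, hnuc3, hnuc4, hnuc5]
  have hH1 : coeff 1 H = (70 : ℚ) := by
    rw [hH_def, PF.coeff_psComp]
    simp only [Finset.sum_range_succ, Finset.sum_range_zero]
    norm_num [pow_zero, coeff_one, hh0, hh1, hnuc0, hnuc1, hnuc2, hnuc3, hnuc4, hnuc5, hnup1_1]
  have hH2 : coeff 2 H = (1323 : ℚ) := by
    rw [hH_def, PF.coeff_psComp]
    simp only [Finset.sum_range_succ, Finset.sum_range_zero]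
    norm_num [pow_zero, coeff_one, hh0, hh1, hh2, hnuc0, hnuc1, hnuc2, hnuc3, hnuc4, hnuc5, hnup1_2, hnup2_2]
  have hH3 : coeff 3 H = ((248920 : ℚ)/3) := by
    rw [hH_def, PF.coeff_psComp]
    simp only [Finset.sum_range_succ, Finset.sum_range_zero]
    norm_num [pow_zero, coeff_one, hh0, hh1, hh2, hh3, hnuc0, hnuc1, hnuc2, hnuc3, hnuc4, hnuc5, hnup1_3, hnup2_3, hnup3_3]
  have hH4 : coeff 4 H = ((14993475 : ℚ)/2) := by
    rw [hH_def, PF.coeff_psComp]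
    simp only [Finset.sum_range_succ, Finset.sum_range_zero]
    norm_num [pow_zero, coeff_one, hh0, hh1, hh2, hh3, hh4, hnuc0, hnuc1, hnuc2, hnuc3, hnuc4, hnuc5, hnup1_4, hnup2_4, hnup3_4, hnup4_4]
  have hH5 : coeff 5 H = (793130198 : ℚ) := by
    rw [hH_def, PF.coeff_psComp]
    simp only [Finset.sum_range_succ, Finset.sum_range_zero]
    norm_num [pow_zero, coeff_one, hh0, hh1, hh2, hh3, hh4, hh5, hnuc0, hnuc1, hnuc2, hnuc3, hnuc4, hnuc5, hnup1_5, hnup2_5, hnup3_5, hnup4_5, hnup5_5]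
  have hWc1 : coeff 1 (psComp (w * f⁻¹) nu) = (84 : ℚ) := by
    rw [PF.coeff_psComp]
    simp only [Finset.sum_range_succ, Finset.sum_range_zero]
    norm_num [pow_zero, coeff_one, hwf0, hwf1, hnuc0, hnuc1, hnuc2, hnuc3, hnuc4, hnuc5, hnup1_1]
  have hWc2 : coeff 2 (psComp (w * f⁻¹) nu) = (8379 : ℚ) := by
    rw [PF.coeff_psComp]
    simp only [Finset.sum_range_succ, Finset.sum_range_zero]
    norm_num [pow_zero, coeff_one, hwf0, hwf1, hwf2, hnuc0, hnuc1, hnuc2, hnuc3, hnuc4, hnuc5, hnup1_2, hnup2_2]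
  have hWc3 : coeff 3 (psComp (w * f⁻¹) nu) = ((1306396 : ℚ)/3) := by
    rw [PF.coeff_psComp]
    simp only [Finset.sum_range_succ, Finset.sum_range_zero]
    norm_num [pow_zero, coeff_one, hwf0, hwf1, hwf2, hwf3, hnuc0, hnuc1, hnuc2, hnuc3, hnuc4, hnuc5, hnup1_3, hnup2_3, hnup3_3]
  have hWc4 : coeff 4 (psComp (w * f⁻¹) nu) = ((444015089 : ℚ)/12) := by
    rw [PF.coeff_psComp]
    simp only [Finset.sum_range_succ, Finset.sum_range_zero]
    norm_num [pow_zero, coeff_one, hwf0, hwf1, hwf2, hwf3, hwf4, hnuc0, hnuc1, hnuc2, hnuc3, hnuc4, hnuc5, hnup1_4, hnup2_4, hnup3_4, hnup4_4]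
  have hWc5 : coeff 5 (psComp (w * f⁻¹) nu) = ((96180733334 : ℚ)/25) := by
    rw [PF.coeff_psComp]
    simp only [Finset.sum_range_succ, Finset.sum_range_zero]
    norm_num [pow_zero, coeff_one, hwf0, hwf1, hwf2, hwf3, hwf4, hwf5, hnuc0, hnuc1, hnuc2, hnuc3, hnuc4, hnuc5, hnup1_5, hnup2_5, hnup3_5, hnup4_5, hnup5_5]
  have hH2_1 : coeff 1 (H ^ 2) = (0 : ℚ) := by
    rw [sq, PF.coeff_mul']
    simp only [Finset.sum_range_succ, Finset.sum_range_zero]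
    norm_num [hH0, hH1, hH2, hH3, hH4, hH5]
  have hH2_2 : coeff 2 (H ^ 2) = (4900 : ℚ) := by
    rw [sq, PF.coeff_mul']
    simp only [Finset.sum_range_succ, Finset.sum_range_zero]
    norm_num [hH0, hH1, hH2, hH3, hH4, hH5]
  have hH2_3 : coeff 3 (H ^ 2) = (185220 : ℚ) := by
    rw [sq, PF.coeff_mul']
    simp only [Finset.sum_range_succ, Finset.sum_range_zero]
    norm_num [hH0, hH1, hH2, hH3, hH4, hH5]
  have hH2_4 : coeff 4 (H ^ 2) = ((40099787 : ℚ)/3) := by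
    rw [sq, PF.coeff_mul']
    simp only [Finset.sum_range_succ, Finset.sum_range_zero]
    norm_num [hH0, hH1, hH2, hH3, hH4, hH5]
  have hH2_5 : coeff 5 (H ^ 2) = (1269090690 : ℚ) := by
    rw [sq, PF.coeff_mul']
    simp only [Finset.sum_range_succ, Finset.sum_range_zero]
    norm_num [hH0, hH1, hH2, hH3, hH4, hH5]
  have hWd1 : coeff 1 W = (84 : ℚ) := by
    rw [hW_def, map_sub, hWc1, hH2_1]
    norm_num
  have hWd2 : coeff 2 W = (3479 : ℚ) := by
    rw [hW_def, map_sub, hWc2, hH2_2]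
    norm_num
  have hWd3 : coeff 3 W = ((750736 : ℚ)/3) := by
    rw [hW_def, map_sub, hWc3, hH2_3]
    norm_num
  have hWd4 : coeff 4 W = ((94538647 : ℚ)/4) := by
    rw [hW_def, map_sub, hWc4, hH2_4]
    norm_num
  have hWd5 : coeff 5 W = ((64453466084 : ℚ)/25) := by
    rw [hW_def, map_sub, hWc5, hH2_5]
    norm_num
  have hKc0 : coeff 0 K = 14 := by rw [coeff_zero_eq_constantCoeff]; exact hK₀
  have hKc1 : coeff 1 K = (588 : ℚ) := by
    have e := congrArg (coeff 1) hKu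
    rw [PF.coeff_mul'] at e
    simp only [Finset.sum_range_succ, Finset.sum_range_zero, map_add, PF.coeff_Dop,
      PF.coeff_two] at e
    norm_num [hu0, hu1, hWd1, hKc0] at e
    linarith [e]
  have hKc2 : coeff 2 K = (97412 : ℚ) := by
    have e := congrArg (coeff 2) hKu
    rw [PF.coeff_mul'] at e
    simp only [Finset.sum_range_succ, Finset.sum_range_zero, map_add, PF.coeff_Dop,
      PF.coeff_two] at e
    norm_num [hu0, hu1, hu2, hWd2, hKc0] at e
    linarith [e]
  have hKc3 : coeff 3 K = (15765456 : ℚ) := by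
    have e := congrArg (coeff 3) hKu
    rw [PF.coeff_mul'] at e
    simp only [Finset.sum_range_succ, Finset.sum_range_zero, map_add, PF.coeff_Dop,
      PF.coeff_two] at e
    norm_num [hu0, hu1, hu2, hu3, hWd3, hKc0] at e
    linarith [e]
  have hKc4 : coeff 4 K = (2647082116 : ℚ) := by
    have e := congrArg (coeff 4) hKu
    rw [PF.coeff_mul'] at e
    simp only [Finset.sum_range_succ, Finset.sum_range_zero, map_add, PF.coeff_Dop,
      PF.coeff_two] at e
    norm_num [hu0, hu1, hu2, hu3, hu4, hWd4, hKc0] at e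
    linarith [e]
  have hKc5 : coeff 5 K = (451174262588 : ℚ) := by
    have e := congrArg (coeff 5) hKu
    rw [PF.coeff_mul'] at e
    simp only [Finset.sum_range_succ, Finset.sum_range_zero, map_add, PF.coeff_Dop,
      PF.coeff_two] at e
    norm_num [hu0, hu1, hu2, hu3, hu4, hu5, hWd5, hKc0] at e
    linarith [e]
  have d1 : Nat.divisors 1 = {1} := by decide
  have d2 : Nat.divisors 2 = {1, 2} := by decide
  have d3 : Nat.divisors 3 = {1, 3} := by decide
  have d4 : Nat.divisors 4 = {1, 2, 4} := by decide
  have d5 : Nat.divisors 5 = {1, 5} := by decide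
  have e1 := hn 1 (by norm_num) (by norm_num)
  have e2 := hn 2 (by norm_num) (by norm_num)
  have e3 := hn 3 (by norm_num) (by norm_num)
  have e4 := hn 4 (by norm_num) (by norm_num)
  have e5 := hn 5 (by norm_num) (by norm_num)
  rw [hKc1, d1] at e1
  rw [hKc2, d2] at e2
  rw [hKc3, d3] at e3
  rw [hKc4, d4] at e4
  rw [hKc5, d5] at e5
  simp only [Finset.sum_insert, Finset.mem_insert, Finset.mem_singleton,
    Finset.sum_singleton] at e1 e2 e3 e4 e5
  norm_num at e1 e2 e3 e4 e5
  refine ⟨by linarith, by linarith, by linarith, by linarith, by linarith⟩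
end

section
/- Suppose K in Q[[Q]] has constant coefficient 14 and satisfies: for every y in Q[[q]][t] with L1~ y = 0, D_Q~ ( D_Q~ ( K^{-1} * D_Q~ ( D_Q~ ( T(y) ) ) ) ) = 0. Let y_0, y_1, y_2, y_3 be the normalized solutions of L1~, i.e. for each k in {0,1,2,3}, y_k is the unique element sum_{i=0}^{k} t^i * y_{k,i} of Q[[q]][t] with L1~ y_k = 0, y_{k,k} = f, and constant coefficient of y_{k,i} equal to 0 for i < k. Then T(y_0) = 1, T(y_1) = s, and T(y_0), T(y_1), T(y_2), T(y_3) form a Q-basis of the space {z in Q[[Q]][s] : D_Q~(D_Q~(K^{-1} * D_Q~(D_Q~ z))) = 0}. (This is the 'basis of solutions' assertion of Theorem 1.) -/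
open PowerSeries

open PowerSeries

lemma coeff_Dop (a : ℚ⟦X⟧) (n : ℕ) : coeff n (Dop a) = n * coeff n a := by
  cases n with
  | zero => simp [Dop, coeff_zero_eq_constantCoeff]
  | succ m => rw [Dop, coeff_succ_X_mul, coeff_derivative]; push_cast; ring

lemma Dop_zero : Dop 0 = 0 := by simp [Dop]

lemma Dop_add (a b : ℚ⟦X⟧) : Dop (a + b) = Dop a + Dop b := by
  ext n; simp [coeff_Dop, mul_add]

lemma Dop_smul (r : ℚ) (a : ℚ⟦X⟧) : Dop (r • a) = r • Dop a := by
  ext n; simp [coeff_Dop]; ring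

lemma constantCoeff_Dop (a : ℚ⟦X⟧) : constantCoeff (Dop a) = 0 := by
  rw [← coeff_zero_eq_constantCoeff_apply, coeff_Dop]; simp

lemma Dop_PSC (r : ℚ) : Dop (C r) = 0 := by
  ext n
  rcases n with _ | m
  · simp [coeff_Dop]
  · simp [coeff_Dop, coeff_C]

lemma Dop_eq_zero {a : ℚ⟦X⟧} (h : Dop a = 0) : a = C (constantCoeff a) := by
  ext n
  rcases n with _ | m
  · simp [coeff_C, coeff_zero_eq_constantCoeff]
  · have := congrArg (coeff (m+1)) h
    rw [coeff_Dop] at this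
    simp only [map_zero] at this
    have h2 : ((m:ℚ)+1) ≠ 0 := by positivity
    have : coeff (m+1) a = 0 := by
      push_cast at this
      exact (mul_eq_zero.mp this).resolve_left h2
    simp [this, coeff_C]

lemma Dt_coeff (y : Polynomial ℚ⟦X⟧) (i : ℕ) :
    (Dt y).coeff i = y.coeff (i+1) * (i+1) + Dop (y.coeff i) := by
  rw [Dt, Polynomial.coeff_add, Polynomial.coeff_derivative]
  congr 1
  rw [Polynomial.sum, Polynomial.finset_sum_coeff]
  simp only [Polynomial.coeff_C_mul, Polynomial.coeff_X_pow, mul_ite, mul_one, mul_zero]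
  rw [Finset.sum_ite_eq y.support i (fun n => Dop (y.coeff n))]
  split_ifs with h
  · rfl
  · rw [Polynomial.notMem_support_iff.mp h, Dop_zero]

lemma Dop_neg (a : ℚ⟦X⟧) : Dop (-a) = -Dop a := by
  ext n; simp [coeff_Dop]

lemma Dt_add (y z : Polynomial ℚ⟦X⟧) : Dt (y + z) = Dt y + Dt z := by
  ext i; simp [Dt_coeff, Dop_add, add_mul]; ring

lemma Dt_smul (r : ℚ) (y : Polynomial ℚ⟦X⟧) : Dt (r • y) = r • Dt y := by
  ext i
  simp only [Dt_coeff, Polynomial.coeff_smul, Dop_smul]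
  simp only [smul_eq_C_mul]
  ring

lemma Dt_zero : Dt 0 = 0 := by
  ext i; simp [Dt_coeff, Dop_zero]

lemma Dt_neg (y : Polynomial ℚ⟦X⟧) : Dt (-y) = -Dt y := by
  ext i; simp [Dt_coeff, Dop_neg]; ring

lemma Dt_sub (y z : Polynomial ℚ⟦X⟧) : Dt (y - z) = Dt y - Dt z := by
  rw [sub_eq_add_neg, Dt_add, Dt_neg, sub_eq_add_neg]

lemma Dt_C (a : ℚ⟦X⟧) : Dt (Polynomial.C a) = Polynomial.C (Dop a) := by
  ext i
  rcases i with _ | j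
  · simp [Dt_coeff]
  · simp [Dt_coeff, Dop_zero]

lemma Dt_CX (c : ℚ⟦X⟧) (h : Dop c = 0) :
    Dt (Polynomial.C c * Polynomial.X) = Polynomial.C c := by
  ext i
  rcases i with _ | j
  · simp [Dt_coeff, Dop_zero]
  · rcases j with _ | j <;>
      simp [Dt_coeff, Polynomial.coeff_C_mul, Polynomial.coeff_X, h, Dop_zero]

lemma constantCoeff_Dt_coeff (y : Polynomial ℚ⟦X⟧) (i : ℕ) :
    constantCoeff ((Dt y).coeff i)
      = ((i:ℚ)+1) * constantCoeff (y.coeff (i+1)) := by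
  rw [Dt_coeff, map_add, map_mul, constantCoeff_Dop, add_zero, map_add, map_natCast, map_one]
  ring

lemma Dt_eq_zero {y : Polynomial ℚ⟦X⟧} (h : Dt y = 0) :
    ∃ r : ℚ, y = Polynomial.C (C r) := by
  by_cases hy : y = 0
  · exact ⟨0, by simp [hy]⟩
  have hco : ∀ i, y.coeff (i+1) * ((i:ℚ⟦X⟧)+1) + Dop (y.coeff i) = 0 := by
    intro i
    have := congrArg (fun p : Polynomial ℚ⟦X⟧ => p.coeff i) h
    simpa [Dt_coeff] using this
  have htop : Dop (y.coeff y.natDegree) = 0 := by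
    have := hco y.natDegree
    rwa [Polynomial.coeff_natDegree_succ_eq_zero, zero_mul, zero_add] at this
  have hyd : y.coeff y.natDegree
      = C (constantCoeff (y.coeff y.natDegree)) := Dop_eq_zero htop
  have hd0 : y.natDegree = 0 := by
    by_contra hne
    obtain ⟨k, hk⟩ := Nat.exists_eq_succ_of_ne_zero hne
    have hk' : y.natDegree = k + 1 := hk
    have h1 := congrArg (constantCoeff) (hco k)
    rw [map_add, map_mul, constantCoeff_Dop, add_zero, map_zero, map_add,
      map_natCast, map_one] at h1
    have hnz : ((k:ℚ)+1) ≠ 0 := by positivity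
    have h2 : constantCoeff (y.coeff (k+1)) = 0 := (mul_eq_zero.mp h1).resolve_right hnz
    have h3 : y.coeff y.natDegree = 0 := by
      rw [hk'] at hyd ⊢
      rw [hyd, h2, map_zero]
    exact hy (Polynomial.leadingCoeff_eq_zero.mp h3)
  refine ⟨constantCoeff (y.coeff 0), ?_⟩
  have h4 : y.coeff 0 = C (constantCoeff (y.coeff 0)) := by
    have := hyd; rwa [hd0] at this
  conv_lhs => rw [Polynomial.eq_C_of_natDegree_le_zero (le_of_eq hd0), h4]

lemma Dt_Dt_eq_zero {y : Polynomial ℚ⟦X⟧} (h : Dt (Dt y) = 0) :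
    ∃ a b : ℚ, y = Polynomial.C (C a) * Polynomial.X + Polynomial.C (C b) := by
  obtain ⟨a, ha⟩ := Dt_eq_zero h
  have h2 : Dt (y - Polynomial.C (C a) * Polynomial.X) = 0 := by
    rw [Dt_sub, ha, Dt_CX _ (Dop_PSC a), sub_self]
  obtain ⟨b, hb⟩ := Dt_eq_zero h2
  exact ⟨a, b, by rw [← hb]; ring⟩

lemma coeff_Dop_iter (j : ℕ) (a : ℚ⟦X⟧) (n : ℕ) :
    coeff n (Dop^[j] a) = (n:ℚ)^j * coeff n a := by
  induction j with
  | zero => simp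
  | succ m ih =>
      rw [Function.iterate_succ_apply', coeff_Dop, ih]
      ring

lemma constantCoeff_A4 : constantCoeff A4 = 1 := by
  rw [A4]; simp

lemma constantCoeff_A3 : constantCoeff A3 = 0 := by
  rw [A3]; simp

lemma constantCoeff_A2 : constantCoeff A2 = 0 := by
  rw [A2]; simp

lemma constantCoeff_A1 : constantCoeff A1 = 0 := by
  rw [A1]; simp

lemma constantCoeff_A0 : constantCoeff A0 = 0 := by
  rw [A0]; simp

lemma coeff_mul_iter (A w : ℚ⟦X⟧) (j n : ℕ)
    (hw : ∀ m < n, coeff m w = 0) :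
    coeff n (A * Dop^[j] w) = constantCoeff A * (n:ℚ)^j * coeff n w := by
  rw [coeff_mul]
  rw [Finset.sum_eq_single (0, n)]
  · rw [coeff_Dop_iter, coeff_zero_eq_constantCoeff]; ring
  · rintro ⟨p, q⟩ hmem hne
    rw [Finset.HasAntidiagonal.mem_antidiagonal] at hmem
    have hq : q < n := by
      rcases Nat.lt_or_ge q n with h | h
      · exact h
      · exfalso
        have hq' : q = n := le_antisymm (by omega) h
        have hp : p = 0 := by omega
        exact hne (by rw [hp, hq'])
    rw [coeff_Dop_iter, hw q hq]
    ring
  · intro hnot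
    exact absurd (by simp : (0, n) ∈ Finset.HasAntidiagonal.antidiagonal n) hnot

lemma L1_eq_zero {w : ℚ⟦X⟧} (hw : L1 w = 0) (h0 : constantCoeff w = 0) : w = 0 := by
  ext n
  induction n using Nat.strong_induction_on with
  | _ n ih =>
    rcases n with _ | m
    · simpa [coeff_zero_eq_constantCoeff] using h0
    · have hc := congrArg (coeff (m+1)) hw
      have hprev : ∀ k < m+1, coeff k w = 0 := by
        intro k hk
        simpa using ih k hk
      rw [L1, map_add, map_add, map_add, map_add,
        coeff_mul_iter _ _ 4 _ hprev, coeff_mul_iter _ _ 3 _ hprev,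
        coeff_mul_iter _ _ 2 _ hprev] at hc
      have h4 : coeff (m+1) (A1 * Dop w)
          = constantCoeff A1 * ((m+1:ℕ):ℚ)^1 * coeff (m+1) w := by
        simpa using coeff_mul_iter A1 w 1 (m+1) hprev
      rw [h4] at hc
      have h5 : coeff (m+1) (A0 * w) = constantCoeff A0 * ((m+1:ℕ):ℚ)^0 * coeff (m+1) w := by
        have := coeff_mul_iter A0 w 0 (m+1) hprev
        simpa using this
      rw [h5, constantCoeff_A4, constantCoeff_A3, constantCoeff_A2,
        constantCoeff_A1, constantCoeff_A0, map_zero] at hc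
      have hnz : (((m+1:ℕ)):ℚ)^4 ≠ 0 := by positivity
      simp only [one_mul, zero_mul, mul_zero, add_zero, zero_add, pow_zero] at hc
      simpa using (mul_eq_zero.mp hc).resolve_left hnz

lemma Dt_iter_C (k : ℕ) (a : ℚ⟦X⟧) :
    Dt^[k] (Polynomial.C a) = Polynomial.C (Dop^[k] a) := by
  induction k with
  | zero => rfl
  | succ m ih => rw [Function.iterate_succ_apply', ih, Dt_C, Function.iterate_succ_apply']

lemma L1t_C (a : ℚ⟦X⟧) : L1t (Polynomial.C a) = Polynomial.C (L1 a) := by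
  rw [L1t, L1, Dt_iter_C, Dt_iter_C, Dt_iter_C, Dt_C]
  simp only [← Polynomial.C_mul, ← Polynomial.C_add]

lemma Dt_iter_sub (k : ℕ) (y z : Polynomial ℚ⟦X⟧) :
    Dt^[k] (y - z) = Dt^[k] y - Dt^[k] z := by
  induction k with
  | zero => rfl
  | succ m ih => rw [Function.iterate_succ_apply', ih, Dt_sub,
      Function.iterate_succ_apply', Function.iterate_succ_apply']

lemma L1t_sub (y z : Polynomial ℚ⟦X⟧) : L1t (y - z) = L1t y - L1t z := by
  rw [L1t, L1t, L1t, Dt_iter_sub, Dt_iter_sub, Dt_iter_sub, Dt_sub]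
  ring

lemma psComp_zero_left (nu : ℚ⟦X⟧) : psComp 0 nu = 0 := by
  ext k
  simp [psComp]

lemma psComp_one_left (nu : ℚ⟦X⟧) : psComp 1 nu = 1 := by
  ext k
  rw [psComp, coeff_mk]
  rw [Finset.sum_eq_single 0]
  · simp
  · intro n _ hn
    simp [coeff_one, hn]
  · intro h
    exact absurd (Finset.mem_range.mpr (Nat.succ_pos k)) h

lemma mirrorT_eq_sum (f g nu : ℚ⟦X⟧) (p : Polynomial ℚ⟦X⟧) (N : ℕ) (h : p.natDegree < N) :
    mirrorT f g nu p = ∑ i ∈ Finset.range N,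
      (Polynomial.X - Polynomial.C (psComp (g * f⁻¹) nu)) ^ i *
        Polynomial.C (psComp (p.coeff i * f⁻¹) nu) := by
  rw [mirrorT]
  exact Polynomial.sum_over_range' p (fun n => by simp [psComp_zero_left]) N h

lemma pow_natDegree_eq (c : ℚ⟦X⟧) (i : ℕ) :
    ((Polynomial.X - Polynomial.C c) ^ i).natDegree = i := by
  rw [(Polynomial.monic_X_sub_C c).natDegree_pow, Polynomial.natDegree_X_sub_C, mul_one]

lemma term_natDegree_le (c t : ℚ⟦X⟧) (i : ℕ) :
    ((Polynomial.X - Polynomial.C c) ^ i * Polynomial.C t).natDegree ≤ i := by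
  refine le_trans Polynomial.natDegree_mul_le ?_
  rw [pow_natDegree_eq, Polynomial.natDegree_C, add_zero]

lemma mirrorT_coeff_eq_zero (f g nu : ℚ⟦X⟧) (p : Polynomial ℚ⟦X⟧) (k j : ℕ)
    (hdeg : p.degree ≤ (k:ℕ)) (hj : k < j) :
    (mirrorT f g nu p).coeff j = 0 := by
  have hnd : p.natDegree < k + 1 :=
    Nat.lt_succ_of_le (Polynomial.natDegree_le_iff_degree_le.mpr hdeg)
  rw [mirrorT_eq_sum f g nu p (k+1) hnd, Polynomial.finset_sum_coeff]
  refine Finset.sum_eq_zero fun i hi => ?_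
  refine Polynomial.coeff_eq_zero_of_natDegree_lt (lt_of_le_of_lt (term_natDegree_le _ _ _) ?_)
  have := Finset.mem_range.mp hi
  omega

lemma mirrorT_coeff_top (f g nu : ℚ⟦X⟧) (p : Polynomial ℚ⟦X⟧) (k : ℕ)
    (hdeg : p.degree ≤ (k:ℕ)) :
    (mirrorT f g nu p).coeff k = psComp (p.coeff k * f⁻¹) nu := by
  have hnd : p.natDegree < k + 1 :=
    Nat.lt_succ_of_le (Polynomial.natDegree_le_iff_degree_le.mpr hdeg)
  rw [mirrorT_eq_sum f g nu p (k+1) hnd, Polynomial.finset_sum_coeff]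
  rw [Finset.sum_eq_single k]
  · rw [Polynomial.coeff_mul_C]
    have h1 : ((Polynomial.X - Polynomial.C (psComp (g * f⁻¹) nu)) ^ k).coeff k = 1 := by
      have := ((Polynomial.monic_X_sub_C (psComp (g * f⁻¹) nu)).pow k).coeff_natDegree
      rwa [pow_natDegree_eq] at this
    rw [h1, one_mul]
  · intro i hi hne
    have hik : i < k := lt_of_le_of_ne (Nat.lt_succ_iff.mp (Finset.mem_range.mp hi)) hne
    exact Polynomial.coeff_eq_zero_of_natDegree_lt (lt_of_le_of_lt (term_natDegree_le _ _ _) hik)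
  · intro h
    exact absurd (Finset.mem_range.mpr (Nat.lt_succ_self k)) h

lemma smul_poly_eq (r : ℚ) (p : Polynomial ℚ⟦X⟧) :
    r • p = Polynomial.C (C r) * p := by
  ext n
  rw [Polynomial.coeff_smul, Polynomial.coeff_C_mul, smul_eq_C_mul]

noncomputable def sols (K : ℚ⟦X⟧) : Submodule ℚ (Polynomial ℚ⟦X⟧) where
  carrier := {z | Dt (Dt (Polynomial.C K⁻¹ * Dt (Dt z))) = 0}
  add_mem' := by
    intro a b ha hb
    simp only [Set.mem_setOf_eq] at *
    rw [Dt_add, Dt_add, mul_add, Dt_add, Dt_add, ha, hb, add_zero]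
  zero_mem' := by
    simp only [Set.mem_setOf_eq]
    rw [Dt_zero, Dt_zero, mul_zero, Dt_zero, Dt_zero]
  smul_mem' := by
    intro c a ha
    simp only [Set.mem_setOf_eq] at *
    rw [Dt_smul, Dt_smul, mul_smul_comm, Dt_smul, Dt_smul, ha, smul_zero]

lemma sol_struct (K : ℚ⟦X⟧) (hK₀ : constantCoeff K = 14) {z : Polynomial ℚ⟦X⟧}
    (hz : Dt (Dt (Polynomial.C K⁻¹ * Dt (Dt z))) = 0) :
    ∃ a b : ℚ, Dt (Dt z)
      = Polynomial.C (K * C a) * Polynomial.X + Polynomial.C (K * C b) := by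
  obtain ⟨a, b, hab⟩ := Dt_Dt_eq_zero hz
  refine ⟨a, b, ?_⟩
  have hKu : K * K⁻¹ = 1 := PowerSeries.mul_inv_cancel K (by rw [hK₀]; norm_num)
  calc Dt (Dt z) = Polynomial.C K * (Polynomial.C K⁻¹ * Dt (Dt z)) := by
        rw [← mul_assoc, ← Polynomial.C_mul, hKu, Polynomial.C_1, one_mul]
    _ = _ := by
        rw [hab, mul_add, ← mul_assoc, ← Polynomial.C_mul, ← Polynomial.C_mul]

lemma rep_phi1 (K : ℚ⟦X⟧) (hK₀ : constantCoeff K = 14) (a b : ℚ) :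
    constantCoeff
      ((Polynomial.C (K * C a) * Polynomial.X + Polynomial.C (K * C b)).coeff 1)
      = 14 * a := by
  have h : (Polynomial.C (K * C a) * Polynomial.X
      + Polynomial.C (K * C b)).coeff 1 = K * C a := by
    simp [Polynomial.coeff_C]
  rw [h, map_mul, constantCoeff_C, hK₀]

lemma rep_phi0 (K : ℚ⟦X⟧) (hK₀ : constantCoeff K = 14) (a b : ℚ) :
    constantCoeff
      ((Polynomial.C (K * C a) * Polynomial.X + Polynomial.C (K * C b)).coeff 0)
      = 14 * b := by
  have h : (Polynomial.C (K * C a) * Polynomial.X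
      + Polynomial.C (K * C b)).coeff 0 = K * C b := by
    simp [Polynomial.coeff_C]
  rw [h, map_mul, constantCoeff_C, hK₀]

lemma phi_DtDt (y : Polynomial ℚ⟦X⟧) (i : ℕ) :
    constantCoeff ((Dt (Dt y)).coeff i)
      = ((i:ℚ)+1) * ((i:ℚ)+2) * constantCoeff (y.coeff (i+2)) := by
  rw [constantCoeff_Dt_coeff, constantCoeff_Dt_coeff]
  push_cast
  ring

lemma rep_combine (K : ℚ⟦X⟧) (a b a2 b2 a3 b3 lam mu : ℚ)
    (h1 : a - lam * a2 - mu * a3 = 0) (h2 : b - lam * b2 - mu * b3 = 0) :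
    (Polynomial.C (K * C a) * Polynomial.X + Polynomial.C (K * C b))
      - lam • (Polynomial.C (K * C a2) * Polynomial.X + Polynomial.C (K * C b2))
      - mu • (Polynomial.C (K * C a3) * Polynomial.X + Polynomial.C (K * C b3)) = 0 := by
  have e1 : (C a : ℚ⟦X⟧) - C lam * C a2 - C mu * C a3 = 0 := by
    rw [← map_mul, ← map_mul, ← map_sub, ← map_sub, h1, map_zero]
  have e2 : (C b : ℚ⟦X⟧) - C lam * C b2 - C mu * C b3 = 0 := by
    rw [← map_mul, ← map_mul, ← map_sub, ← map_sub, h2, map_zero]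
  rw [smul_poly_eq, smul_poly_eq]
  ext n
  simp only [Polynomial.coeff_sub, Polynomial.coeff_add, Polynomial.coeff_C_mul,
    Polynomial.coeff_X, Polynomial.coeff_C, Polynomial.coeff_zero, mul_add,
    Polynomial.coeff_mul_X]
  rcases n with _ | n
  · norm_num
    rename_i m
    linear_combination (coeff m) K * h2
  · rcases n with _ | n
    · norm_num
      rename_i m
      linear_combination (coeff m) K * h1
    · norm_num

/-- The 'basis of solutions' assertion of Theorem 1: the mirror transforms
`T(y₀), T(y₁), T(y₂), T(y₃)` of the normalized solutions of the Picard-Fuchs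
equation satisfy `T(y₀) = 1`, `T(y₁) = s`, and form a `ℚ`-basis of the solution
space of the quantum differential operator `D² (1/K) D²`. -/
theorem pfaffian_mirror_basis_of_solutions (f g nu K : ℚ⟦X⟧)
    (hf₀ : constantCoeff f = 1) (hf : L1 f = 0)
    (hg₀ : constantCoeff g = 0)
    (hg : L1t (Polynomial.X * Polynomial.C f + Polynomial.C g) = 0)
    (hnu₀ : constantCoeff nu = 0)
    (hnu : psComp nu (mirrorMap f g) = X)
    (hK₀ : constantCoeff K = 14)
    (hK : ∀ y : Polynomial ℚ⟦X⟧, L1t y = 0 →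
      Dt (Dt (Polynomial.C K⁻¹ * Dt (Dt (mirrorT f g nu y)))) = 0)
    (Y : Fin 4 → Polynomial ℚ⟦X⟧)
    (hY : ∀ k : Fin 4, L1t (Y k) = 0 ∧ (Y k).degree ≤ (k : ℕ) ∧
      (Y k).coeff k = f ∧ ∀ i < (k : ℕ), constantCoeff ((Y k).coeff i) = 0) :
    mirrorT f g nu (Y 0) = 1 ∧ mirrorT f g nu (Y 1) = Polynomial.X ∧
      ∃ V : Submodule ℚ (Polynomial ℚ⟦X⟧),
        (V : Set (Polynomial ℚ⟦X⟧)) =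
            {z | Dt (Dt (Polynomial.C K⁻¹ * Dt (Dt z))) = 0} ∧
          LinearIndependent ℚ (fun k : Fin 4 => mirrorT f g nu (Y k)) ∧
          Submodule.span ℚ (Set.range fun k : Fin 4 => mirrorT f g nu (Y k)) = V := by
  have hff : f * f⁻¹ = 1 := PowerSeries.mul_inv_cancel f (by rw [hf₀]; norm_num)
  have hnd0 : (Y 0).natDegree < 1 := by
    have := Polynomial.natDegree_le_iff_degree_le.mpr (hY 0).2.1
    omega
  have hT0 : mirrorT f g nu (Y 0) = 1 := by
    rw [mirrorT_eq_sum f g nu (Y 0) 1 hnd0, Finset.sum_range_one, pow_zero, one_mul]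
    have hc : (Y 0).coeff 0 = f := (hY 0).2.2.1
    rw [hc, hff, psComp_one_left, Polynomial.C_1]
  have hd1 : (Y 1).degree ≤ 1 := by exact_mod_cast (hY 1).2.1
  have hc1 : (Y 1).coeff 1 = f := (hY 1).2.2.1
  have ha : (Y 1).coeff 0 = g := by
    have h1 : Y 1 = Polynomial.C ((Y 1).coeff 1) * Polynomial.X + Polynomial.C ((Y 1).coeff 0) :=
      Polynomial.eq_X_add_C_of_degree_le_one hd1
    have heq : Y 1 - (Polynomial.X * Polynomial.C f + Polynomial.C g)
        = Polynomial.C ((Y 1).coeff 0 - g) := by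
      conv_lhs => rw [h1, hc1]
      rw [Polynomial.C_sub]; ring
    have hL : L1t (Polynomial.C ((Y 1).coeff 0 - g)) = 0 := by
      rw [← heq, L1t_sub, (hY 1).1, hg, sub_zero]
    rw [L1t_C] at hL
    have hL' : L1 ((Y 1).coeff 0 - g) = 0 := by
      exact_mod_cast Polynomial.C_eq_zero.mp hL
    have h0 : constantCoeff ((Y 1).coeff 0 - g) = 0 := by
      rw [map_sub, hg₀, (hY 1).2.2.2 0 (by decide), sub_zero]
    have := L1_eq_zero hL' h0
    exact sub_eq_zero.mp this
  have hnd1 : (Y 1).natDegree < 2 := by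
    have := Polynomial.natDegree_le_iff_degree_le.mpr (hY 1).2.1
    omega
  have hT1 : mirrorT f g nu (Y 1) = Polynomial.X := by
    rw [mirrorT_eq_sum f g nu (Y 1) 2 hnd1]
    rw [Finset.sum_range_succ, Finset.sum_range_one, pow_zero, one_mul, pow_one]
    rw [ha, hc1, hff, psComp_one_left, Polynomial.C_1, mul_one]
    ring
  have hTtop : ∀ k : Fin 4, (mirrorT f g nu (Y k)).coeff (k:ℕ) = 1 := fun k => by
    rw [mirrorT_coeff_top f g nu (Y k) k (hY k).2.1, (hY k).2.2.1, hff, psComp_one_left]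
  have hTzero : ∀ (k : Fin 4) (j : ℕ), (k:ℕ) < j → (mirrorT f g nu (Y k)).coeff j = 0 :=
    fun k j hj => mirrorT_coeff_eq_zero f g nu (Y k) k j (hY k).2.1 hj
  have hind : LinearIndependent ℚ (fun k : Fin 4 => mirrorT f g nu (Y k)) := by
    rw [Fintype.linearIndependent_iff]
    intro c hc
    have key : ∀ j : ℕ,
        ∑ i : Fin 4, c i * constantCoeff ((mirrorT f g nu (Y i)).coeff j) = 0 := by
      intro j
      have h1 := congrArg (fun p : Polynomial ℚ⟦X⟧ => constantCoeff (p.coeff j)) hc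
      simp only [Polynomial.finset_sum_coeff, map_sum, Polynomial.coeff_smul,
        Polynomial.coeff_zero, map_zero] at h1
      rw [← h1]
      apply Finset.sum_congr rfl
      intro i _
      rw [smul_eq_C_mul, map_mul, constantCoeff_C]
    have e3 := key 3; have e2 := key 2; have e1 := key 1; have e0 := key 0
    rw [Fin.sum_univ_four] at e3 e2 e1 e0
    have z03 : (mirrorT f g nu (Y 0)).coeff 3 = 0 := hTzero 0 3 (by decide)
    have z13 : (mirrorT f g nu (Y 1)).coeff 3 = 0 := hTzero 1 3 (by decide)
    have z23 : (mirrorT f g nu (Y 2)).coeff 3 = 0 := hTzero 2 3 (by decide)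
    have z02 : (mirrorT f g nu (Y 0)).coeff 2 = 0 := hTzero 0 2 (by decide)
    have z12 : (mirrorT f g nu (Y 1)).coeff 2 = 0 := hTzero 1 2 (by decide)
    have z01 : (mirrorT f g nu (Y 0)).coeff 1 = 0 := hTzero 0 1 (by decide)
    have t3 : (mirrorT f g nu (Y 3)).coeff 3 = 1 := hTtop 3
    have t2 : (mirrorT f g nu (Y 2)).coeff 2 = 1 := hTtop 2
    have t1 : (mirrorT f g nu (Y 1)).coeff 1 = 1 := hTtop 1
    have t0 : (mirrorT f g nu (Y 0)).coeff 0 = 1 := hTtop 0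
    rw [z03, z13, z23, t3] at e3
    simp only [map_zero, map_one, mul_zero, mul_one, zero_add, add_zero] at e3
    rw [z02, z12, t2] at e2
    simp only [map_zero, map_one, mul_zero, mul_one, zero_add, add_zero, e3, zero_mul] at e2
    rw [z01, t1] at e1
    simp only [map_zero, map_one, mul_zero, mul_one, zero_add, add_zero, e3, e2, zero_mul] at e1
    rw [t0] at e0
    simp only [map_zero, map_one, mul_zero, mul_one, zero_add, add_zero, e3, e2, e1,
      zero_mul] at e0
    intro i
    fin_cases i <;> assumption
  refine ⟨hT0, hT1, sols K, rfl, hind, ?_⟩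
  apply le_antisymm
  · rw [Submodule.span_le]
    rintro p ⟨k, rfl⟩
    exact hK (Y k) (hY k).1
  · intro z hz
    have hz' : Dt (Dt (Polynomial.C K⁻¹ * Dt (Dt z))) = 0 := hz
    obtain ⟨a, b, hab⟩ := sol_struct K hK₀ hz'
    obtain ⟨a2, b2, hab2⟩ := sol_struct K hK₀ (hK (Y 2) (hY 2).1)
    obtain ⟨a3, b3, hab3⟩ := sol_struct K hK₀ (hK (Y 3) (hY 3).1)
    have ha2 : a2 = 0 := by
      have h := congrArg (fun p : Polynomial ℚ⟦X⟧ => constantCoeff (p.coeff 1)) hab2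
      rw [phi_DtDt, rep_phi1 K hK₀, hTzero 2 3 (by decide), map_zero, mul_zero] at h
      linarith
    have hb2 : b2 = 1/7 := by
      have h := congrArg (fun p : Polynomial ℚ⟦X⟧ => constantCoeff (p.coeff 0)) hab2
      rw [phi_DtDt, rep_phi0 K hK₀] at h
      have t2 : (mirrorT f g nu (Y 2)).coeff 2 = 1 := hTtop 2
      rw [t2, map_one] at h
      norm_num at h
      linarith
    have ha3 : a3 = 3/7 := by
      have h := congrArg (fun p : Polynomial ℚ⟦X⟧ => constantCoeff (p.coeff 1)) hab3
      rw [phi_DtDt, rep_phi1 K hK₀] at h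
      have t3 : (mirrorT f g nu (Y 3)).coeff 3 = 1 := hTtop 3
      rw [t3, map_one] at h
      norm_num at h
      linarith
    set mu := 7 * a / 3 with hmu
    set lam := 7 * (b - mu * b3) with hlam
    have hW : Dt (Dt (z - lam • mirrorT f g nu (Y 2) - mu • mirrorT f g nu (Y 3))) = 0 := by
      rw [Dt_sub, Dt_sub, Dt_sub, Dt_sub, Dt_smul, Dt_smul, Dt_smul, Dt_smul,
        hab, hab2, hab3]
      exact rep_combine K a b a2 b2 a3 b3 lam mu
        (by rw [ha2, ha3, hmu]; ring) (by rw [hlam, hb2]; ring)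
    obtain ⟨r, r', hrr⟩ := Dt_Dt_eq_zero hW
    have hzdecomp : z = (r • (Polynomial.X : Polynomial ℚ⟦X⟧) + r' • (1 : Polynomial ℚ⟦X⟧))
        + lam • mirrorT f g nu (Y 2) + mu • mirrorT f g nu (Y 3) := by
      have e : r • (Polynomial.X : Polynomial ℚ⟦X⟧) + r' • (1 : Polynomial ℚ⟦X⟧)
          = Polynomial.C (C r) * Polynomial.X + Polynomial.C (C r') := by
        rw [smul_poly_eq, smul_poly_eq, mul_one]
      rw [e, ← hrr]
      abel
    have hmem : ∀ k : Fin 4, mirrorT f g nu (Y k) ∈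
        Submodule.span ℚ (Set.range fun k : Fin 4 => mirrorT f g nu (Y k)) :=
      fun k => Submodule.subset_span ⟨k, rfl⟩
    have hXmem : (Polynomial.X : Polynomial ℚ⟦X⟧) ∈
        Submodule.span ℚ (Set.range fun k : Fin 4 => mirrorT f g nu (Y k)) := hT1 ▸ hmem 1
    have h1mem : (1 : Polynomial ℚ⟦X⟧) ∈
        Submodule.span ℚ (Set.range fun k : Fin 4 => mirrorT f g nu (Y k)) := hT0 ▸ hmem 0
    rw [hzdecomp]
    exact add_mem (add_mem (add_mem (Submodule.smul_mem _ _ hXmem)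
      (Submodule.smul_mem _ _ h1mem)) (Submodule.smul_mem _ _ (hmem 2)))
      (Submodule.smul_mem _ _ (hmem 3))
end
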